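/- arXiv:1303.1248 — 5 statements merged into one kernel-verified Lean document; each statement's English description precedes it below -/
import Mathlib

section
/- Fix t ∈ [0,T], a state i ∈ {0,1} with j = 1−i, and suppose g(·,i) : [0,T] → (0,∞) is differentiable at t and ḡ(t,j) ∈ ℝ is given. Define, for x > 0, v(t,x,i) = g(t,i)·x^γ/γ, v̄(t,x,j) = ḡ(t,j)·x^γ/γ, F₁(t,x,i) = μ(t,i)·x/(σ(t,i)²·(1−γ)), F₂(t,x,i) = g(t,i)^{1/(γ−1)}·x, and U(x) = x^γ/γ. Then the equation ∂v/∂t(t,x,i) + (r(t,i)x + μ(t,i)F₁(t,x,i) − F₂(t,x,i))·∂v/∂x(t,x,i) + (σ(t,i)²F₁(t,x,i)²/2)·∂²v/∂x²(t,x,i) + U(F₂(t,x,i)) + λ_{ii}·v(t,x,i) − ρ_i·v(t,x,i) + λ_{ij}·v̄(t,x,j) = 0 holds for all x > 0 if and only if g'(t,i) + (β(t,i) − ρ_i + λ_{ii})·g(t,i) + (1−γ)·g(t,i)^{γ/(γ−1)} + λ_{ij}·ḡ(t,j) = 0. -/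
lemma d_first (c γ : ℝ) (hγ0 : γ ≠ 0) {x : ℝ} (hx : 0 < x) :
    deriv (fun y : ℝ => c * y ^ γ / γ) x = c * x ^ (γ - 1) := by
  have : (fun y : ℝ => c * y ^ γ / γ) = fun y : ℝ => (c / γ) * y ^ γ := by
    funext y; ring
  rw [this, deriv_const_mul_field, Real.deriv_rpow_const x]
  field_simp

lemma d_second (c γ : ℝ) (hγ0 : γ ≠ 0) {x : ℝ} (hx : 0 < x) :
    deriv (deriv (fun y : ℝ => c * y ^ γ / γ)) x = c * (γ - 1) * x ^ (γ - 2) := by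
  have hev : deriv (fun y : ℝ => c * y ^ γ / γ) =ᶠ[nhds x]
      fun y : ℝ => c * y ^ (γ - 1) := by
    filter_upwards [IsOpen.mem_nhds isOpen_Ioi (Set.mem_Ioi.mpr hx)] with y hy
    exact d_first c γ hγ0 hy
  rw [hev.deriv_eq, deriv_const_mul_field, Real.deriv_rpow_const x]
  have : γ - 1 - 1 = γ - 2 := by ring
  rw [this]; ring

/-- CRRA ansatz reduction: fix `t ∈ [0,T]` and a regime `i` (with `j = 1−i`); with
`v(t,x,i) = g(t,i)·x^γ/γ`, `v̄(t,x,j) = ḡ(t,j)·x^γ/γ`,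
`F₁(t,x,i) = μ·x/(σ²(1−γ))`, `F₂(t,x,i) = g(t,i)^{1/(γ−1)}·x`, `U(x) = x^γ/γ`, the extended
HJB equation holds for all `x > 0` iff the coefficient `g(·,i)` satisfies
`g' + (β − ρ_i + λ_{ii})g + (1−γ)g^{γ/(γ−1)} + λ_{ij}ḡ(t,j) = 0`, where
`β = γr + γμ²/(2σ²(1−γ))` and `λ_{ii} = −λ_{ij} = −lam`.
Here `r, μ, σ, ρi` are the (fixed) values of the market coefficients and discount rate at
`(t,i)`, `gbarj = ḡ(t,j)`, and `g : ℝ → ℝ` stands for `g(·,i)`. -/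
theorem stmt_5 (T γ t r μ σ ρi lam gbarj : ℝ)
    (hT : 0 < T) (hγ : γ < 1) (hγ0 : γ ≠ 0) (ht : t ∈ Set.Icc 0 T)
    (hσ : 0 < σ) (hlam : 0 ≤ lam)
    (g : ℝ → ℝ) (hgpos : ∀ s ∈ Set.Icc 0 T, 0 < g s)
    (hgdiff : DifferentiableAt ℝ g t) :
    (∀ x : ℝ, 0 < x →
        deriv (fun τ => g τ * x ^ γ / γ) t
          + (r * x + μ * (μ * x / (σ ^ 2 * (1 - γ))) - g t ^ (1 / (γ - 1)) * x)
              * deriv (fun y => g t * y ^ γ / γ) x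
          + (σ ^ 2 * (μ * x / (σ ^ 2 * (1 - γ))) ^ 2 / 2)
              * deriv (deriv (fun y => g t * y ^ γ / γ)) x
          + (g t ^ (1 / (γ - 1)) * x) ^ γ / γ
          + (-lam) * (g t * x ^ γ / γ) - ρi * (g t * x ^ γ / γ)
          + lam * (gbarj * x ^ γ / γ) = 0) ↔
      deriv g t + (γ * r + γ * μ ^ 2 / (2 * σ ^ 2 * (1 - γ)) - ρi - lam) * g t
          + (1 - γ) * g t ^ (γ / (γ - 1)) + lam * gbarj = 0 := by
  have hγ1 : γ - 1 ≠ 0 := sub_ne_zero.mpr (ne_of_lt hγ)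
  have h1γ : (1 : ℝ) - γ ≠ 0 := sub_ne_zero.mpr (ne_of_lt hγ).symm
  have hG : 0 < g t := hgpos t ht
  have hg1 : g t ^ (1 / (γ - 1)) * g t = g t ^ (γ / (γ - 1)) := by
    nth_rewrite 2 [← Real.rpow_one (g t)]
    rw [← Real.rpow_add hG]
    congr 1
    field_simp
    ring
  have ha : g t ^ (1 / (γ - 1)) = g t ^ (γ / (γ - 1)) / g t :=
    (eq_div_iff hG.ne').mpr hg1
  have key : ∀ x : ℝ, 0 < x →
      deriv (fun τ => g τ * x ^ γ / γ) t
          + (r * x + μ * (μ * x / (σ ^ 2 * (1 - γ))) - g t ^ (1 / (γ - 1)) * x)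
              * deriv (fun y => g t * y ^ γ / γ) x
          + (σ ^ 2 * (μ * x / (σ ^ 2 * (1 - γ))) ^ 2 / 2)
              * deriv (deriv (fun y => g t * y ^ γ / γ)) x
          + (g t ^ (1 / (γ - 1)) * x) ^ γ / γ
          + (-lam) * (g t * x ^ γ / γ) - ρi * (g t * x ^ γ / γ)
          + lam * (gbarj * x ^ γ / γ)
        = x ^ γ / γ *
          (deriv g t + (γ * r + γ * μ ^ 2 / (2 * σ ^ 2 * (1 - γ)) - ρi - lam) * g t
            + (1 - γ) * g t ^ (γ / (γ - 1)) + lam * gbarj) := by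
    intro x hx
    have d1 : deriv (fun τ => g τ * x ^ γ / γ) t = deriv g t * (x ^ γ / γ) := by
      simp only [mul_div_assoc]
      exact deriv_mul_const hgdiff _
    have hg2 : (g t ^ (1 / (γ - 1)) * x) ^ γ = g t ^ (γ / (γ - 1)) * x ^ γ := by
      rw [Real.mul_rpow (Real.rpow_pos_of_pos hG _).le hx.le,
        ← Real.rpow_mul hG.le]
      congr 2
      ring
    have hx1 : x ^ (γ - 1) = x ^ γ / x := by
      rw [Real.rpow_sub hx, Real.rpow_one]
    have hx2 : x ^ (γ - 2) = x ^ γ / x ^ 2 := by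
      rw [show γ - 2 = γ - (2 : ℕ) by norm_num, Real.rpow_sub hx,
        Real.rpow_natCast]
    rw [d1, d_first (g t) γ hγ0 hx, d_second (g t) γ hγ0 hx, hg2, hx1, hx2, ha]
    field_simp
    ring
  constructor
  · intro h
    have h1 := h 1 one_pos
    rw [key 1 one_pos, Real.one_rpow] at h1
    rcases mul_eq_zero.mp h1 with h' | h'
    · exact absurd h' (by simpa using hγ0)
    · exact h'
  · intro h x hx
    rw [key x hx, h, mul_zero]
end

section
/- Let ρ > 0 be a single discount rate. There exists a unique continuously differentiable function ĝ : [0,T] × {0,1} → ℝ satisfying, for every i ∈ {0,1} with j = 1−i and every t ∈ [0,T], ĝ'(t,i) + (β(t,i) − ρ + λ_{ii})·ĝ(t,i) + (1−γ)·ĝ(t,i)^{γ/(γ−1)} + λ_{ij}·ĝ(t,j) = 0, with terminal conditions ĝ(T,i) = 1. Moreover there exist constants 0 < m ≤ M < ∞ with m ≤ ĝ(t,i) ≤ M for all t ∈ [0,T] and i ∈ {0,1}. -/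
/-- The coefficient `β(t,i) = γ r(t,i) + γ μ(t,i)²/(2σ(t,i)²(1−γ))`. -/
noncomputable def betaFn (γ : ℝ) (r μ σ : ℝ → Fin 2 → ℝ) : ℝ → Fin 2 → ℝ :=
  fun t i => γ * r t i + γ * (μ t i) ^ 2 / (2 * (σ t i) ^ 2 * (1 - γ))

/-- `ĝ` is a continuously differentiable solution on `[0,T]` of the pre-commitment
ODE system with constant discount rate `ρ` (regime set `{0,1}`, `j = 1 − i`,
`λ_{ij} = lam i`, `λ_{ii} = −lam i`), with terminal conditions `ĝ(T,i) = 1`. -/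
def IsPrecommitSol (T γ ρ : ℝ) (β : ℝ → Fin 2 → ℝ) (lam : Fin 2 → ℝ)
    (g : ℝ → Fin 2 → ℝ) : Prop :=
  (∀ i : Fin 2, ContDiffOn ℝ 1 (fun t => g t i) (Set.Icc 0 T)) ∧
  (∀ i : Fin 2, ∀ t ∈ Set.Icc 0 T,
      derivWithin (fun s => g s i) (Set.Icc 0 T) t
          + (β t i - ρ - lam i) * g t i
          + (1 - γ) * g t i ^ (γ / (γ - 1)) + lam i * g t (1 - i) = 0) ∧
  (∀ i : Fin 2, g T i = 1)


open Set Filter Real Topology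

namespace Stmt7Aux

/-- clamp to `[a,b]` -/
noncomputable def clampF (a b x : ℝ) : ℝ := max a (min b x)

lemma clampF_mem {a b : ℝ} (hab : a ≤ b) (x : ℝ) : clampF a b x ∈ Icc a b := by
  constructor
  · exact le_max_left _ _
  · exact max_le hab (min_le_left _ _)

lemma clampF_eq {a b x : ℝ} (h1 : a ≤ x) (h2 : x ≤ b) : clampF a b x = x := by
  unfold clampF
  rw [min_eq_right h2, max_eq_right h1]

lemma clampF_eq_low {a b x : ℝ} (hab : a ≤ b) (h : x ≤ a) : clampF a b x = a := by
  unfold clampF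
  rw [min_eq_right (h.trans hab), max_eq_left h]

lemma clampF_lip (a b x y : ℝ) : |clampF a b x - clampF a b y| ≤ |x - y| := by
  unfold clampF
  rw [max_comm a (min b x), max_comm a (min b y)]
  refine (abs_max_sub_max_le_abs _ _ _).trans ?_
  rcases le_total x b with h | h <;> rcases le_total y b with h' | h'
  · rw [min_eq_right h, min_eq_right h']
  · rw [min_eq_right h, min_eq_left h']
    rw [abs_of_nonpos (by linarith)]
    rcases abs_cases (x - y) with ⟨he, _⟩ | ⟨he, _⟩ <;> linarith
  · rw [min_eq_left h, min_eq_right h']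
    rw [abs_of_nonneg (by linarith)]
    rcases abs_cases (x - y) with ⟨he, _⟩ | ⟨he, _⟩ <;> linarith
  · rw [min_eq_left h, min_eq_left h']
    simp [abs_nonneg]

lemma clampF_le_add {a b : ℝ} (ha : 0 ≤ a) (x : ℝ) : clampF a b x ≤ a + |x| := by
  unfold clampF
  refine max_le (le_add_of_nonneg_right (abs_nonneg x)) ((min_le_right _ _).trans ?_)
  have := le_abs_self x; linarith

lemma rpow_lin_bound {a y q : ℝ} (ha : 0 < a) (hay : a ≤ y) (hq : q < 1) :
    y ^ q ≤ a ^ q + 1 + y := by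
  have hy : 0 < y := ha.trans_le hay
  have haq : 0 < a ^ q := Real.rpow_pos_of_pos ha q
  rcases le_or_gt q 0 with h | h
  · have := Real.rpow_le_rpow_of_nonpos ha hay h
    linarith
  · rcases le_total y 1 with h1 | h1
    · have := Real.rpow_le_one hy.le h1 h.le
      linarith
    · have := Real.rpow_le_rpow_of_exponent_le h1 hq.le
      rw [Real.rpow_one] at this
      linarith

lemma rpow_abs_sub_le {l h q x y : ℝ} (hl : 0 < l) (hq : q < 1)
    (hx : x ∈ Icc l h) (hy : y ∈ Icc l h) :
    |x ^ q - y ^ q| ≤ |q| * l ^ (q - 1) * |x - y| := by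
  have key : ∀ z ∈ Icc l h, HasDerivWithinAt (fun w : ℝ => w ^ q)
      (q * z ^ (q - 1)) (Icc l h) z := fun z hz =>
    (Real.hasDerivAt_rpow_const (Or.inl (hl.trans_le hz.1).ne')).hasDerivWithinAt
  have bound : ∀ z ∈ Icc l h, ‖q * z ^ (q - 1)‖ ≤ |q| * l ^ (q - 1) := by
    intro z hz
    rw [Real.norm_eq_abs, abs_mul, abs_of_nonneg (Real.rpow_pos_of_pos (hl.trans_le hz.1) _).le]
    exact mul_le_mul_of_nonneg_left
      (Real.rpow_le_rpow_of_nonpos hl hz.1 (by linarith)) (abs_nonneg q)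
  have := (convex_Icc l h).norm_image_sub_le_of_norm_hasDerivWithin_le key bound hy hx
  simpa [Real.norm_eq_abs] using this

lemma gb_mono {δ K ε x y : ℝ} (hδ : 0 ≤ δ) (hK : 0 < K) (hε : 0 ≤ ε) (hxy : x ≤ y) :
    gronwallBound δ K ε x ≤ gronwallBound δ K ε y := by
  rw [gronwallBound_of_K_ne_0 hK.ne']
  have h1 : Real.exp (K * x) ≤ Real.exp (K * y) :=
    Real.exp_le_exp.mpr (mul_le_mul_of_nonneg_left hxy hK.le)
  have h2 : 0 ≤ ε / K := div_nonneg hε hK.le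
  nlinarith

lemma gb_one_le {K ε T : ℝ} (hK : 0 < K) (hε : 0 ≤ ε) (hT : 0 ≤ T) :
    1 ≤ gronwallBound 1 K ε T := by
  rw [gronwallBound_of_K_ne_0 hK.ne']
  have h1 : 1 ≤ Real.exp (K * T) := Real.one_le_exp (by positivity)
  have h2 : 0 ≤ ε / K := div_nonneg hε hK.le
  nlinarith

/-- Barrier lemma: if a function starts above `a` and has strictly positive derivative
whenever it is `≤ a`, then it stays above `a`. -/
lemma barrier {S a : ℝ} {u u' : ℝ → ℝ}
    (hc : ContinuousOn u (Icc 0 S))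
    (hd : ∀ s ∈ Icc 0 S, HasDerivWithinAt u (u' s) (Icc 0 S) s)
    (h0 : a ≤ u 0)
    (hbar : ∀ s ∈ Icc 0 S, u s ≤ a → 0 < u' s) :
    ∀ s ∈ Icc 0 S, a ≤ u s := by
  intro s₁ hs₁
  by_contra hcon
  push_neg at hcon
  have hsub : Icc 0 s₁ ⊆ Icc 0 S := Icc_subset_Icc le_rfl hs₁.2
  set A : Set ℝ := Icc 0 s₁ ∩ u ⁻¹' (Ici a) with hA
  have h0A : (0 : ℝ) ∈ A := ⟨⟨le_rfl, hs₁.1⟩, h0⟩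
  have hAclosed : IsClosed A :=
    ContinuousOn.preimage_isClosed_of_isClosed (hc.mono hsub) isClosed_Icc isClosed_Ici
  have hAcomp : IsCompact A := isCompact_Icc.of_isClosed_subset hAclosed inter_subset_left
  set s₀ := sSup A with hs₀def
  have hs₀A : s₀ ∈ A := hAcomp.sSup_mem ⟨0, h0A⟩
  have hs₀u : a ≤ u s₀ := hs₀A.2
  have hs₀I : s₀ ∈ Icc 0 s₁ := hs₀A.1
  have hs₀S : s₀ ∈ Icc 0 S := hsub hs₀I
  have hlt : s₀ < s₁ := lt_of_le_of_ne hs₀I.2 (fun h => by rw [h] at hs₀u; linarith)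
  have hIoc : ∀ τ ∈ Ioc s₀ s₁, u τ < a := by
    intro τ hτ
    by_contra hτa
    push_neg at hτa
    have : τ ∈ A := ⟨⟨hs₀I.1.trans hτ.1.le, hτ.2⟩, hτa⟩
    exact absurd (le_csSup hAcomp.bddAbove this) (not_le.mpr hτ.1)
  have key : ∀ s' ∈ Ioo s₀ s₁, u s' < u s₁ := by
    intro s' hs'
    have hsub' : Icc s' s₁ ⊆ Icc 0 S :=
      Icc_subset_Icc (hs₀I.1.trans hs'.1.le) hs₁.2
    have hmono : StrictMonoOn u (Icc s' s₁) := by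
      apply strictMonoOn_of_deriv_pos (convex_Icc s' s₁) (hc.mono hsub')
      intro x hx
      rw [interior_Icc] at hx
      have hxS : x ∈ Icc 0 S := hsub' ⟨hx.1.le, hx.2.le⟩
      have hx0 : 0 < x := lt_of_le_of_lt (hs₀I.1.trans hs'.1.le) hx.1
      have hxSlt : x < S := lt_of_lt_of_le hx.2 hs₁.2
      have hda : HasDerivAt u (u' x) x :=
        (hd x hxS).hasDerivAt (Icc_mem_nhds hx0 hxSlt)
      rw [hda.deriv]
      exact hbar x hxS (le_of_lt ((hIoc x ⟨hs'.1.trans hx.1, hx.2.le⟩)))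
    exact hmono (left_mem_Icc.mpr (le_of_lt hs'.2)) (right_mem_Icc.mpr (le_of_lt hs'.2)) hs'.2
  -- take limit s' → s₀⁺
  have hne : (𝓝[Ioo s₀ s₁] s₀).NeBot := by
    rw [nhdsWithin_Ioo_eq_nhdsGT hlt]
    exact nhdsGT_neBot s₀
  have htend : Tendsto u (𝓝[Ioo s₀ s₁] s₀) (𝓝 (u s₀)) :=
    (hc.continuousWithinAt hs₀S).mono
      (fun x hx => hsub ⟨hs₀I.1.trans hx.1.le, hx.2.le⟩) |>.tendsto
  have hle : u s₀ ≤ u s₁ := by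
    refine le_of_tendsto htend ?_
    filter_upwards [self_mem_nhdsWithin] with τ hτ
    exact (key τ hτ).le
  linarith

end Stmt7Aux

namespace Stmt7Aux

open Set Filter Real Topology

set_option maxHeartbeats 1000000 in
theorem aux (T : ℝ) (hT : 0 < T) (q c1 : ℝ) (hq : q < 1) (hc1 : 0 < c1)
    (α : ℝ → Fin 2 → ℝ) (hα : ∀ i, ContinuousOn (fun t => α t i) (Icc 0 T))
    (lam : Fin 2 → ℝ) (hlam : ∀ i, 0 ≤ lam i) :
    ∃ g : ℝ → Fin 2 → ℝ,
      ((∀ i : Fin 2, ContDiffOn ℝ 1 (fun t => g t i) (Icc 0 T)) ∧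
       (∀ i : Fin 2, ∀ t ∈ Icc 0 T,
          derivWithin (fun s => g s i) (Icc 0 T) t + α t i * g t i
            + c1 * g t i ^ q + lam i * g t (1 - i) = 0) ∧
       (∀ i : Fin 2, g T i = 1)) ∧
      (∀ g₂ : ℝ → Fin 2 → ℝ,
        ((∀ i : Fin 2, ContDiffOn ℝ 1 (fun t => g₂ t i) (Icc 0 T)) ∧
         (∀ i : Fin 2, ∀ t ∈ Icc 0 T,
            derivWithin (fun s => g₂ s i) (Icc 0 T) t + α t i * g₂ t i
              + c1 * g₂ t i ^ q + lam i * g₂ t (1 - i) = 0) ∧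
         (∀ i : Fin 2, g₂ T i = 1)) →
        ∀ i : Fin 2, ∀ t ∈ Icc 0 T, g₂ t i = g t i) ∧
      ∃ m M : ℝ, 0 < m ∧ m ≤ M ∧ ∀ i : Fin 2, ∀ t ∈ Icc 0 T, m ≤ g t i ∧ g t i ≤ M := by
  ------------------------------------------------------------------ constants
  obtain ⟨K₁, hK₁0, hαK, hlamK⟩ : ∃ K₁ : ℝ, 0 ≤ K₁ ∧
      (∀ t ∈ Icc (0:ℝ) T, ∀ i : Fin 2, |α t i| ≤ K₁) ∧ (∀ i : Fin 2, lam i ≤ K₁) := by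
    obtain ⟨C0, hC0⟩ := isCompact_Icc.exists_bound_of_continuousOn (hα 0)
    obtain ⟨C1, hC1⟩ := isCompact_Icc.exists_bound_of_continuousOn (hα 1)
    refine ⟨max C0 0 + max C1 0 + lam 0 + lam 1, ?_, ?_, ?_⟩
    · linarith [le_max_right C0 (0:ℝ), le_max_right C1 (0:ℝ), hlam 0, hlam 1]
    · intro t ht i
      have m0 := le_max_left C0 (0:ℝ); have m1 := le_max_left C1 (0:ℝ)
      have n0 := le_max_right C0 (0:ℝ); have n1 := le_max_right C1 (0:ℝ)
      fin_cases i
      · show |α t 0| ≤ _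
        have := hC0 t ht; rw [Real.norm_eq_abs] at this
        linarith [hlam 0, hlam 1]
      · show |α t 1| ≤ _
        have := hC1 t ht; rw [Real.norm_eq_abs] at this
        linarith [hlam 0, hlam 1]
    · intro i
      have n0 := le_max_right C0 (0:ℝ); have n1 := le_max_right C1 (0:ℝ)
      fin_cases i
      · show lam 0 ≤ _
        linarith [hlam 0, hlam 1]
      · show lam 1 ≤ _
        linarith [hlam 0, hlam 1]
  have hK₁1 : (0:ℝ) < K₁ + 1 := by linarith
  have hp : 0 < 1 - q := by linarith
  have hB : 0 < c1 / (K₁ + 1) := div_pos hc1 hK₁1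
  obtain ⟨a, ha0, ha1, key_a⟩ : ∃ a : ℝ, 0 < a ∧ a ≤ 1 ∧ (K₁ + 1) * a ≤ c1 * a ^ q := by
    refine ⟨min 1 ((c1 / (K₁ + 1)) ^ (1 / (1 - q))), ?_, min_le_left _ _, ?_⟩
    · exact lt_min one_pos (Real.rpow_pos_of_pos hB _)
    set a : ℝ := min 1 ((c1 / (K₁ + 1)) ^ (1 / (1 - q))) with hadef
    have ha0 : 0 < a := lt_min one_pos (Real.rpow_pos_of_pos hB _)
    have haq : 0 < a ^ q := Real.rpow_pos_of_pos ha0 q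
    have h2 : a ≤ (c1 / (K₁ + 1)) ^ (1 / (1 - q)) := min_le_right _ _
    have h1 : a ^ (1 - q) ≤ c1 / (K₁ + 1) := by
      calc a ^ (1-q) ≤ ((c1 / (K₁ + 1)) ^ (1 / (1 - q))) ^ (1-q) :=
            Real.rpow_le_rpow ha0.le h2 hp.le
        _ = c1 / (K₁+1) := by
            rw [← Real.rpow_mul hB.le, one_div_mul_cancel hp.ne', Real.rpow_one]
    have h3 : (K₁ + 1) * a ^ (1 - q) ≤ c1 := by
      rw [← le_div_iff₀' hK₁1]; exact h1
    have h5 : a ^ (1 - q) * a ^ q = a := by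
      rw [← Real.rpow_add ha0]; norm_num
    calc (K₁+1)*a = (K₁+1) * a^(1-q) * a^q := by rw [mul_assoc, h5]
      _ ≤ c1 * a^q := mul_le_mul_of_nonneg_right h3 haq.le
  have haq : 0 < a ^ q := Real.rpow_pos_of_pos ha0 q
  obtain ⟨L₀, ε₀, hL₀def, hε₀def⟩ :
      ∃ L₀ ε₀ : ℝ, L₀ = 2*K₁ + c1 ∧ ε₀ = 2*K₁*a + c1*(a^q + 1 + a) := ⟨_, _, rfl, rfl⟩
  have hL₀ : 0 < L₀ := by rw [hL₀def]; linarith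
  have hε₀ : 0 ≤ ε₀ := by
    rw [hε₀def]; nlinarith [mul_nonneg hK₁0 ha0.le]
  obtain ⟨M, hM1, hMg⟩ : ∃ M : ℝ, 1 ≤ M ∧
      ∀ s ∈ Icc (0:ℝ) T, gronwallBound 1 L₀ ε₀ (s - 0) ≤ M := by
    refine ⟨gronwallBound 1 L₀ ε₀ T, gb_one_le hL₀ hε₀ hT.le, ?_⟩
    intro s hs
    rw [sub_zero]
    exact gb_mono zero_le_one hL₀ hε₀ hs.2
  obtain ⟨b, hbdef⟩ : ∃ b : ℝ, b = M + 1 := ⟨_, rfl⟩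
  have hab : a ≤ b := by rw [hbdef]; linarith
  have hMb : M < b := by rw [hbdef]; linarith
  ------------------------------------------------------------------ the field
  set tp : ℝ → ℝ := fun s => max 0 (min T s) with htpdef
  have htpIcc : ∀ s, tp s ∈ Icc (0:ℝ) T :=
    fun s => ⟨le_max_left _ _, max_le hT.le (min_le_left _ _)⟩
  have htpeq : ∀ s ∈ Icc (0:ℝ) T, tp s = s := by
    intro s hs; simp only [htpdef]; rw [min_eq_right hs.2, max_eq_right hs.1]
  have hTtp : ∀ s, T - tp s ∈ Icc (0:ℝ) T :=
    fun s => ⟨by linarith [(htpIcc s).2], by linarith [(htpIcc s).1]⟩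
  set cl : ℝ → ℝ := clampF a b with hcldef
  have hclmem : ∀ x, cl x ∈ Icc a b := fun x => clampF_mem hab x
  have hcl0 : ∀ x, 0 < cl x := fun x => ha0.trans_le (hclmem x).1
  have hclq0 : ∀ x, 0 < cl x ^ q := fun x => Real.rpow_pos_of_pos (hcl0 x) q
  have hclcont : Continuous cl := by
    simp only [hcldef]
    unfold clampF
    exact continuous_const.max (continuous_const.min continuous_id)
  set w : ℝ → (Fin 2 → ℝ) → (Fin 2 → ℝ) :=
    fun s x i => α (T - tp s) i * cl (x i) + c1 * cl (x i) ^ q + lam i * cl (x (1 - i))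
    with hwdef
  have hαK' : ∀ (s : ℝ) (i : Fin 2), |α (T - tp s) i| ≤ K₁ := fun s i => hαK _ (hTtp s) i
  obtain ⟨P, hPdef⟩ : ∃ P : ℝ, P = a^q + 1 + b := ⟨_, rfl⟩
  have hP0 : 0 < P := by rw [hPdef]; nlinarith
  have hclq : ∀ x, cl x ^ q ≤ P := by
    intro x
    have := rpow_lin_bound ha0 (hclmem x).1 hq
    have h2 := (hclmem x).2
    rw [hPdef]; linarith
  have habs3 : ∀ x y z : ℝ, |x + y + z| ≤ |x| + |y| + |z| := by
    intro x y z
    calc |x + y + z| ≤ |x + y| + |z| := abs_add_le _ _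
      _ ≤ |x| + |y| + |z| := by linarith [abs_add_le x y]
  obtain ⟨C₀, hC₀def⟩ : ∃ C₀ : ℝ, C₀ = K₁ * b + c1 * P + K₁ * b := ⟨_, rfl⟩
  have hC₀0 : 0 ≤ C₀ := by
    rw [hC₀def]
    nlinarith [mul_nonneg hK₁0 (ha0.trans_le hab).le, mul_nonneg hc1.le hP0.le]
  have hwabs : ∀ (s : ℝ) (x : Fin 2 → ℝ) (i : Fin 2), |w s x i| ≤ C₀ := by
    intro s x i
    have e1 : |α (T - tp s) i * cl (x i)| ≤ K₁ * b := by
      rw [abs_mul, abs_of_pos (hcl0 _)]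
      exact mul_le_mul (hαK' s i) (hclmem _).2 (hcl0 _).le hK₁0
    have e2 : |c1 * cl (x i) ^ q| ≤ c1 * P := by
      rw [abs_mul, abs_of_pos hc1, abs_of_pos (hclq0 _)]
      exact mul_le_mul_of_nonneg_left (hclq _) hc1.le
    have e3 : |lam i * cl (x (1 - i))| ≤ K₁ * b := by
      rw [abs_mul, abs_of_nonneg (hlam i), abs_of_pos (hcl0 _)]
      exact mul_le_mul (hlamK i) (hclmem _).2 (hcl0 _).le hK₁0
    calc |w s x i| ≤ _ := habs3 _ _ _
      _ ≤ C₀ := by rw [hC₀def]; linarith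
  have hwnorm : ∀ (s : ℝ) (x : Fin 2 → ℝ), ‖w s x‖ ≤ C₀ := fun s x =>
    (pi_norm_le_iff_of_nonneg hC₀0).mpr fun i => by
      rw [Real.norm_eq_abs]; exact hwabs s x i
  obtain ⟨Lψ, hLψdef⟩ : ∃ Lψ : ℝ, Lψ = |q| * a ^ (q - 1) := ⟨_, rfl⟩
  have hLψ0 : 0 ≤ Lψ := by
    rw [hLψdef]
    exact mul_nonneg (abs_nonneg q) (Real.rpow_pos_of_pos ha0 _).le
  have hψ : ∀ x y : ℝ, |cl x ^ q - cl y ^ q| ≤ Lψ * |x - y| := by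
    intro x y
    rw [hLψdef]
    exact (rpow_abs_sub_le ha0 hq (hclmem x) (hclmem y)).trans
      (mul_le_mul_of_nonneg_left (clampF_lip a b x y)
        (mul_nonneg (abs_nonneg q) (Real.rpow_pos_of_pos ha0 _).le))
  obtain ⟨L, hLdef⟩ : ∃ L : ℝ, L = K₁ + c1 * Lψ + K₁ := ⟨_, rfl⟩
  have hL0 : 0 ≤ L := by
    rw [hLdef]; nlinarith [mul_nonneg hc1.le hLψ0]
  have hwlip : ∀ s : ℝ, LipschitzWith (Real.toNNReal L) (w s) := by
    intro s
    apply LipschitzWith.of_dist_le_mul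
    intro x y
    rw [Real.coe_toNNReal L hL0, dist_pi_le_iff (mul_nonneg hL0 dist_nonneg)]
    intro i
    rw [Real.dist_eq]
    have hdk : ∀ k : Fin 2, |cl (x k) - cl (y k)| ≤ dist x y := by
      intro k
      refine (clampF_lip a b _ _).trans ?_
      rw [← Real.dist_eq]; exact dist_le_pi_dist x y k
    have hdq : |cl (x i) ^ q - cl (y i) ^ q| ≤ Lψ * dist x y := by
      refine (hψ _ _).trans (mul_le_mul_of_nonneg_left ?_ hLψ0)
      rw [← Real.dist_eq]; exact dist_le_pi_dist x y i
    have hrepr : w s x i - w s y i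
        = α (T - tp s) i * (cl (x i) - cl (y i)) + c1 * (cl (x i) ^ q - cl (y i) ^ q)
          + lam i * (cl (x (1 - i)) - cl (y (1 - i))) := by
      simp only [hwdef]; ring
    rw [hrepr]
    have e1 : |α (T - tp s) i * (cl (x i) - cl (y i))| ≤ K₁ * dist x y := by
      rw [abs_mul]; exact mul_le_mul (hαK' s i) (hdk i) (abs_nonneg _) hK₁0
    have e2 : |c1 * (cl (x i) ^ q - cl (y i) ^ q)| ≤ c1 * (Lψ * dist x y) := by
      rw [abs_mul, abs_of_pos hc1]; exact mul_le_mul_of_nonneg_left hdq hc1.le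
    have e3 : |lam i * (cl (x (1 - i)) - cl (y (1 - i)))| ≤ K₁ * dist x y := by
      rw [abs_mul, abs_of_nonneg (hlam i)]
      exact mul_le_mul (hlamK i) (hdk _) (abs_nonneg _) hK₁0
    calc |_ + _ + _| ≤ _ := habs3 _ _ _
      _ ≤ L * dist x y := by rw [hLdef]; nlinarith [dist_nonneg (x := x) (y := y)]
  ------------------------------------------------------------------ Picard–Lindelöf
  set x₀ : Fin 2 → ℝ := fun _ => (1:ℝ) with hx₀def
  have hTsub : Continuous fun s : ℝ => T - s := continuous_const.sub continuous_id
  have htpcont : Continuous tp := by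
    simp only [htpdef]
    exact continuous_const.max (continuous_const.min continuous_id)
  have hwcont : ∀ x : Fin 2 → ℝ, ContinuousOn (fun s => w s x) (Icc 0 T) := by
    intro x
    apply continuousOn_pi.mpr
    intro i
    simp only [hwdef]
    refine ContinuousOn.add (ContinuousOn.add ?_ continuousOn_const) continuousOn_const
    exact (((hα i).comp (continuous_const.sub htpcont).continuousOn
      (fun s _ => hTtp s)).mul continuousOn_const)
  have hpl : IsPicardLindelof w (tmin := 0) (tmax := T) ⟨0, left_mem_Icc.mpr hT.le⟩ x₀
      (Real.toNNReal (C₀ * T)) 0 (Real.toNNReal C₀) (Real.toNNReal L) :=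
    { lipschitzOnWith := fun t _ => (hwlip t).lipschitzOnWith
      continuousOn := fun x _ => hwcont x
      norm_le := fun t _ x _ => (hwnorm t x).trans (Real.le_coe_toNNReal C₀)
      mul_max_le := by
        simp only [Real.coe_toNNReal _ hC₀0, NNReal.coe_sub le_rfl, tsub_zero, NNReal.coe_zero,
          Real.coe_toNNReal _ (mul_nonneg hC₀0 hT.le), sub_zero, sub_self,
          max_eq_left hT.le, le_refl] }
  obtain ⟨u, hu0, huD⟩ := IsPicardLindelof.exists_eq_forall_mem_Icc_hasDerivWithinAt₀ hpl
  replace hu0 : u 0 = x₀ := hu0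
  have hucont : ContinuousOn u (Icc 0 T) := fun s hs => (huD s hs).continuousWithinAt
  have huComp : ∀ (i : Fin 2), ∀ s ∈ Icc (0:ℝ) T,
      HasDerivWithinAt (fun s => u s i) (w s (u s) i) (Icc 0 T) s :=
    fun i s hs => hasDerivWithinAt_pi.mp (huD s hs) i
  ------------------------------------------------------------------ a priori bounds
  have hIci : ∀ s ∈ Ico (0:ℝ) T, HasDerivWithinAt u (w s (u s)) (Ici s) s := fun s hs =>
    (huD s (Ico_subset_Icc_self hs)).mono_of_mem_nhdsWithin (Icc_mem_nhdsGE_of_mem hs)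
  have hu0norm : ‖u 0‖ ≤ 1 := by
    rw [hu0]
    exact (pi_norm_le_iff_of_nonneg zero_le_one).mpr fun i => by
      simp [hx₀def]
  have hbound : ∀ s ∈ Ico (0:ℝ) T, ‖w s (u s)‖ ≤ L₀ * ‖u s‖ + ε₀ := by
    intro s _
    have hnn : 0 ≤ L₀ * ‖u s‖ + ε₀ := by positivity
    rw [pi_norm_le_iff_of_nonneg hnn]
    intro i
    rw [Real.norm_eq_abs]
    have hk : ∀ k : Fin 2, cl (u s k) ≤ a + ‖u s‖ := by
      intro k
      refine (clampF_le_add ha0.le _).trans ?_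
      have := norm_le_pi_norm (u s) k
      rw [Real.norm_eq_abs] at this
      linarith
    have hq1 : cl (u s i) ^ q ≤ a^q + 1 + (a + ‖u s‖) :=
      (rpow_lin_bound ha0 (hclmem _).1 hq).trans (by linarith [hk i])
    have e1 : |α (T - tp s) i * cl (u s i)| ≤ K₁ * (a + ‖u s‖) := by
      rw [abs_mul, abs_of_pos (hcl0 _)]
      exact mul_le_mul (hαK' s i) (hk i) (hcl0 _).le hK₁0
    have e2 : |c1 * cl (u s i) ^ q| ≤ c1 * (a^q + 1 + (a + ‖u s‖)) := by
      rw [abs_mul, abs_of_pos hc1, abs_of_pos (hclq0 _)]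
      exact mul_le_mul_of_nonneg_left hq1 hc1.le
    have e3 : |lam i * cl (u s (1 - i))| ≤ K₁ * (a + ‖u s‖) := by
      rw [abs_mul, abs_of_nonneg (hlam i), abs_of_pos (hcl0 _)]
      exact mul_le_mul (hlamK i) (hk _) (hcl0 _).le hK₁0
    calc |w s (u s) i| ≤ _ := habs3 _ _ _
      _ ≤ L₀ * ‖u s‖ + ε₀ := by rw [hL₀def, hε₀def]; nlinarith
  have hupper : ∀ s ∈ Icc (0:ℝ) T, ‖u s‖ ≤ M := by
    intro s hs
    have h := norm_le_gronwallBound_of_norm_deriv_right_le hucont hIci hu0norm hbound s hs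
    exact h.trans (hMg s hs)
  have hlow : ∀ (i : Fin 2), ∀ s ∈ Icc (0:ℝ) T, a ≤ u s i := by
    intro i
    apply barrier (u' := fun s => w s (u s) i)
    · exact (continuous_apply i).comp_continuousOn hucont
    · exact fun s hs => huComp i s hs
    · rw [hu0]; exact ha1
    · intro s hs hle
      have hcla : cl (u s i) = a := clampF_eq_low hab hle
      have h1 : -(K₁ * a) ≤ α (T - tp s) i * a :=
        mul_le_mul_of_nonneg_right (neg_le_of_abs_le (hαK' s i)) ha0.le |>.trans_eq' (by ring)
      have h3 : 0 ≤ lam i * cl (u s (1 - i)) := mul_nonneg (hlam i) (hcl0 _).le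
      have : 0 < α (T - tp s) i * a + c1 * a ^ q + lam i * cl (u s (1 - i)) := by
        nlinarith
      simpa only [hwdef, hcla] using this
  have hbox : ∀ s ∈ Icc (0:ℝ) T, ∀ i : Fin 2, u s i ∈ Icc a M := by
    intro s hs i
    refine ⟨hlow i s hs, ?_⟩
    have h1 := norm_le_pi_norm (u s) i
    rw [Real.norm_eq_abs] at h1
    have := hupper s hs
    have := le_abs_self (u s i)
    linarith
  have hclamp : ∀ s ∈ Icc (0:ℝ) T, ∀ i : Fin 2, cl (u s i) = u s i := by
    intro s hs i
    exact clampF_eq (hbox s hs i).1 ((hbox s hs i).2.trans hMb.le)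
  ------------------------------------------------------------------ reversal helper
  have hmaps : MapsTo (fun s : ℝ => T - s) (Icc 0 T) (Icc 0 T) := by
    intro s hs
    simp only [mem_Icc] at hs ⊢
    constructor
    · show 0 ≤ T - s; linarith [hs.2]
    · show T - s ≤ T; linarith [hs.1]
  have hrev : ∀ (f : ℝ → ℝ) (d : ℝ) (t : ℝ), t ∈ Icc (0:ℝ) T →
      HasDerivWithinAt f d (Icc 0 T) (T - t) →
      HasDerivWithinAt (fun s => f (T - s)) (-d) (Icc 0 T) t := by
    intro f d t ht hf
    have hinner : HasDerivWithinAt (fun s : ℝ => T - s) (-1) (Icc 0 T) t :=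
      ((hasDerivAt_id t).const_sub T).hasDerivWithinAt
    have h2 := HasDerivWithinAt.comp t hf hinner hmaps
    rw [show -d = d * -1 by ring]
    exact h2
  ------------------------------------------------------------------ the solution g
  set g : ℝ → Fin 2 → ℝ := fun t i => u (T - t) i with hgdef
  have hval : ∀ t ∈ Icc (0:ℝ) T, ∀ i : Fin 2,
      w (T - t) (u (T - t)) i
        = α t i * g t i + c1 * g t i ^ q + lam i * g t (1 - i) := by
    intro t ht i
    have hTt : T - t ∈ Icc (0:ℝ) T := hmaps ht
    have htp' : tp (T - t) = T - t := htpeq _ hTt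
    simp only [hwdef, hgdef, htp', hclamp _ hTt]
    norm_num
  have hgd : ∀ (i : Fin 2), ∀ t ∈ Icc (0:ℝ) T,
      HasDerivWithinAt (fun t => g t i) (-(w (T - t) (u (T - t)) i)) (Icc 0 T) t := by
    intro i t ht
    exact hrev (fun s => u s i) _ t ht (huComp i (T - t) (hmaps ht))
  have hgdw : ∀ (i : Fin 2), ∀ t ∈ Icc (0:ℝ) T,
      derivWithin (fun t => g t i) (Icc 0 T) t = -(w (T - t) (u (T - t)) i) :=
    fun i t ht => (hgd i t ht).derivWithin (uniqueDiffOn_Icc hT t ht)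
  have hODE : ∀ (i : Fin 2), ∀ t ∈ Icc (0:ℝ) T,
      derivWithin (fun s => g s i) (Icc 0 T) t + α t i * g t i
        + c1 * g t i ^ q + lam i * g t (1 - i) = 0 := by
    intro i t ht
    rw [hgdw i t ht, hval t ht i]
    ring
  have hterm : ∀ i : Fin 2, g T i = 1 := by
    intro i
    simp only [hgdef, sub_self, hu0, hx₀def]
  -- regularity
  have huTcont : ContinuousOn (fun t => u (T - t)) (Icc 0 T) :=
    hucont.comp hTsub.continuousOn hmaps
  have hgcont : ∀ i : Fin 2, ContinuousOn (fun t => g t i) (Icc 0 T) := by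
    intro i
    simp only [hgdef]
    exact (continuous_apply i).comp_continuousOn huTcont
  have hwTcont : ∀ i : Fin 2,
      ContinuousOn (fun t => -(w (T - t) (u (T - t)) i)) (Icc 0 T) := by
    intro i
    apply ContinuousOn.neg
    simp only [hwdef]
    have hcomp : ∀ k : Fin 2, ContinuousOn (fun t => cl (u (T - t) k)) (Icc 0 T) :=
      fun k => hclcont.comp_continuousOn ((continuous_apply k).comp_continuousOn huTcont)
    have hrpow : ContinuousOn (fun t => cl (u (T - t) i) ^ q) (Icc 0 T) :=
      (hcomp i).rpow_const (fun t _ => Or.inl (hcl0 _).ne')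
    have hαcomp : ContinuousOn (fun t => α (T - tp (T - t)) i) (Icc 0 T) :=
      (hα i).comp (continuous_const.sub (htpcont.comp hTsub)).continuousOn
        (fun s _ => hTtp _)
    exact ((hαcomp.mul (hcomp i)).add (continuousOn_const.mul hrpow)).add
      (continuousOn_const.mul (hcomp (1 - i)))
  have hreg : ∀ i : Fin 2, ContDiffOn ℝ 1 (fun t => g t i) (Icc 0 T) := by
    intro i
    have hdiff : DifferentiableOn ℝ (fun t => g t i) (Icc 0 T) :=
      fun t ht => (hgd i t ht).differentiableWithinAt
    have hdercont : ContinuousOn (derivWithin (fun t => g t i) (Icc 0 T)) (Icc 0 T) :=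
      (hwTcont i).congr (fun t ht => hgdw i t ht)
    have h := (contDiffOn_succ_iff_derivWithin (n := 0) (uniqueDiffOn_Icc hT)).mpr
      ⟨hdiff, by simp, by rw [contDiffOn_zero]; exact hdercont⟩
    simpa using h
  ------------------------------------------------------------------ uniqueness
  set F : ℝ → (Fin 2 → ℝ) → (Fin 2 → ℝ) :=
    fun s x i => α (T - tp s) i * x i + c1 * x i ^ q + lam i * x (1 - i) with hFdef
  set B : Set (Fin 2 → ℝ) := {x | ∀ k : Fin 2, x k ∈ Icc (a/2) (M+1)} with hBdef
  have ha2 : 0 < a / 2 := by linarith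
  obtain ⟨Lψ₂, hLψ₂def⟩ : ∃ Lψ₂ : ℝ, Lψ₂ = |q| * (a/2) ^ (q - 1) := ⟨_, rfl⟩
  have hLψ₂0 : 0 ≤ Lψ₂ := by
    rw [hLψ₂def]
    exact mul_nonneg (abs_nonneg q) (Real.rpow_pos_of_pos ha2 _).le
  obtain ⟨L₂, hL₂def⟩ : ∃ L₂ : ℝ, L₂ = K₁ + c1 * Lψ₂ + K₁ := ⟨_, rfl⟩
  have hL₂0 : 0 ≤ L₂ := by
    rw [hL₂def]; nlinarith [mul_nonneg hc1.le hLψ₂0]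
  have hFlip : ∀ s : ℝ, LipschitzOnWith (Real.toNNReal L₂) (F s) B := by
    intro s
    rw [lipschitzOnWith_iff_dist_le_mul]
    intro x hx y hy
    rw [Real.coe_toNNReal L₂ hL₂0, dist_pi_le_iff (mul_nonneg hL₂0 dist_nonneg)]
    intro i
    rw [Real.dist_eq]
    have hdk : ∀ k : Fin 2, |x k - y k| ≤ dist x y := by
      intro k
      rw [← Real.dist_eq]; exact dist_le_pi_dist x y k
    have hdq : |x i ^ q - y i ^ q| ≤ Lψ₂ * dist x y := by
      rw [hLψ₂def]
      refine (rpow_abs_sub_le ha2 hq (hx i) (hy i)).trans ?_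
      exact mul_le_mul_of_nonneg_left (hdk i)
        (mul_nonneg (abs_nonneg q) (Real.rpow_pos_of_pos ha2 _).le)
    have hrepr : F s x i - F s y i
        = α (T - tp s) i * (x i - y i) + c1 * (x i ^ q - y i ^ q)
          + lam i * (x (1 - i) - y (1 - i)) := by
      simp only [hFdef]; ring
    rw [hrepr]
    have e1 : |α (T - tp s) i * (x i - y i)| ≤ K₁ * dist x y := by
      rw [abs_mul]; exact mul_le_mul (hαK' s i) (hdk i) (abs_nonneg _) hK₁0
    have e2 : |c1 * (x i ^ q - y i ^ q)| ≤ c1 * (Lψ₂ * dist x y) := by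
      rw [abs_mul, abs_of_pos hc1]; exact mul_le_mul_of_nonneg_left hdq hc1.le
    have e3 : |lam i * (x (1 - i) - y (1 - i))| ≤ K₁ * dist x y := by
      rw [abs_mul, abs_of_nonneg (hlam i)]
      exact mul_le_mul (hlamK i) (hdk _) (abs_nonneg _) hK₁0
    calc |_ + _ + _| ≤ _ := habs3 _ _ _
      _ ≤ L₂ * dist x y := by rw [hL₂def]; nlinarith [dist_nonneg (x := x) (y := y)]
  have hFw : ∀ s ∈ Icc (0:ℝ) T, F s (u s) = w s (u s) := by
    intro s hs
    funext i
    simp only [hFdef, hwdef, hclamp s hs]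
  have huF : ∀ s ∈ Icc (0:ℝ) T, HasDerivWithinAt u (F s (u s)) (Icc 0 T) s := by
    intro s hs
    rw [hFw s hs]
    exact huD s hs
  have huB : ∀ s ∈ Icc (0:ℝ) T, u s ∈ B := by
    intro s hs k
    have := hbox s hs k
    exact ⟨by linarith [this.1], by linarith [this.2]⟩
  have huniq : ∀ g₂ : ℝ → Fin 2 → ℝ,
      ((∀ i : Fin 2, ContDiffOn ℝ 1 (fun t => g₂ t i) (Icc 0 T)) ∧
       (∀ i : Fin 2, ∀ t ∈ Icc 0 T,
          derivWithin (fun s => g₂ s i) (Icc 0 T) t + α t i * g₂ t i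
            + c1 * g₂ t i ^ q + lam i * g₂ t (1 - i) = 0) ∧
       (∀ i : Fin 2, g₂ T i = 1)) →
      ∀ i : Fin 2, ∀ t ∈ Icc (0:ℝ) T, g₂ t i = g t i := by
    rintro g₂ ⟨hreg₂, hode₂, hterm₂⟩
    set u₂ : ℝ → Fin 2 → ℝ := fun s i => g₂ (T - s) i with hu₂def
    have hu₂cont : ContinuousOn u₂ (Icc 0 T) := by
      apply continuousOn_pi.mpr
      intro i
      exact ((hreg₂ i).continuousOn).comp hTsub.continuousOn hmaps
    have hu₂D : ∀ s ∈ Icc (0:ℝ) T, HasDerivWithinAt u₂ (F s (u₂ s)) (Icc 0 T) s := by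
      intro s hs
      rw [hasDerivWithinAt_pi]
      intro i
      have hmem : T - s ∈ Icc (0:ℝ) T := hmaps hs
      have hder : HasDerivWithinAt (fun t => g₂ t i)
          (derivWithin (fun t => g₂ t i) (Icc 0 T) (T - s)) (Icc 0 T) (T - s) :=
        ((hreg₂ i).differentiableOn one_ne_zero _ hmem).hasDerivWithinAt
      have hrev' := hrev (fun t => g₂ t i) _ s hs hder
      have heq := hode₂ i (T - s) hmem
      have hvalF : F s (u₂ s) i = -(derivWithin (fun t => g₂ t i) (Icc 0 T) (T - s)) := by
        simp only [hFdef, hu₂def, htpeq s hs]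
        linarith
      rw [show (fun s => u₂ s i) = fun s => g₂ (T - s) i from rfl, hvalF]
      exact hrev'
    set Z : Set ℝ := {s | s ∈ Icc (0:ℝ) T ∧ ∀ τ ∈ Icc (0:ℝ) s, u₂ τ = u τ} with hZdef
    have hu₂0 : u₂ 0 = u 0 := by
      funext i
      simp only [hu₂def, sub_zero, hu0, hx₀def, hterm₂ i]
    have h0Z : (0:ℝ) ∈ Z := by
      refine ⟨left_mem_Icc.mpr hT.le, ?_⟩
      intro τ hτ
      have : τ = 0 := le_antisymm hτ.2 hτ.1
      rw [this, hu₂0]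
    have hZbdd : BddAbove Z := ⟨T, fun z hz => hz.1.2⟩
    set sm : ℝ := sSup Z with hsmdef
    have hsm0 : 0 ≤ sm := le_csSup hZbdd h0Z
    have hsmT : sm ≤ T := csSup_le ⟨0, h0Z⟩ fun z hz => hz.1.2
    have hsmIcc : sm ∈ Icc (0:ℝ) T := ⟨hsm0, hsmT⟩
    have hsmeq : ∀ τ ∈ Icc (0:ℝ) sm, u₂ τ = u τ := by
      intro τ hτ
      rcases lt_or_eq_of_le hτ.2 with hlt | heq
      · obtain ⟨z, hzZ, hτz⟩ := exists_lt_of_lt_csSup ⟨0, h0Z⟩ hlt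
        exact hzZ.2 τ ⟨hτ.1, hτz.le⟩
      · have claim : u₂ sm = u sm := by
          rcases eq_or_lt_of_le hsm0 with h0' | h0'
          · rw [← h0', hu₂0]
          · have hsub' : Ico (0:ℝ) sm ⊆ Icc 0 T :=
              fun z hz => ⟨hz.1, hz.2.le.trans hsmT⟩
            have hne : (𝓝[Ico (0:ℝ) sm] sm).NeBot := by
              apply mem_closure_iff_nhdsWithin_neBot.mp
              rw [closure_Ico h0'.ne]
              exact ⟨hsm0, le_rfl⟩
            have ht2 : Tendsto u₂ (𝓝[Ico (0:ℝ) sm] sm) (𝓝 (u₂ sm)) :=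
              (hu₂cont.continuousWithinAt hsmIcc).mono hsub'
            have ht3 : Tendsto u (𝓝[Ico (0:ℝ) sm] sm) (𝓝 (u sm)) :=
              (hucont.continuousWithinAt hsmIcc).mono hsub'
            have hEv : u₂ =ᶠ[𝓝[Ico (0:ℝ) sm] sm] u := by
              filter_upwards [self_mem_nhdsWithin] with z hz
              obtain ⟨z1, hz1Z, hz1⟩ := exists_lt_of_lt_csSup ⟨0, h0Z⟩ hz.2
              exact hz1Z.2 z ⟨hz.1, hz1.le⟩
            exact tendsto_nhds_unique (ht2.congr' hEv) ht3
        rw [heq]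
        exact claim
    have hsmT' : sm = T := by
      by_contra hne
      have hlt : sm < T := lt_of_le_of_ne hsmT hne
      -- the open box
      set O : Set (Fin 2 → ℝ) := ⋂ k : Fin 2,
        (fun x : Fin 2 → ℝ => x k) ⁻¹' Ioo (a/2) (M+1) with hOdef
      have hOopen : IsOpen O :=
        isOpen_iInter_of_finite fun k => (isOpen_Ioo).preimage (continuous_apply k)
      have hOB : O ⊆ B := by
        intro x hx k
        have := mem_iInter.mp hx k
        exact ⟨this.1.le, this.2.le⟩
      have husmO : u₂ sm ∈ O := by
        rw [hsmeq sm ⟨hsm0, le_rfl⟩]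
        rw [mem_iInter]
        intro k
        have := hbox sm hsmIcc k
        exact ⟨by linarith [this.1], by linarith [this.2]⟩
      have hcw : ContinuousWithinAt u₂ (Icc 0 T) sm := hu₂cont.continuousWithinAt hsmIcc
      have hpre : u₂ ⁻¹' O ∈ 𝓝[Icc (0:ℝ) T] sm := hcw (hOopen.mem_nhds husmO)
      obtain ⟨U, hUopen, hsmU, hUsub⟩ := mem_nhdsWithin.mp hpre
      obtain ⟨δ₀, hδ₀, hball⟩ := Metric.isOpen_iff.mp hUopen sm hsmU
      set δ : ℝ := min (δ₀/2) (T - sm) with hδdef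
      have hδpos : 0 < δ := lt_min (by linarith) (by linarith)
      have hδT : sm + δ ≤ T := by
        have := min_le_right (δ₀/2) (T - sm)
        simp only [hδdef]; linarith
      have hsubI : Icc sm (sm + δ) ⊆ Icc (0:ℝ) T :=
        fun z hz => ⟨hsm0.trans hz.1, hz.2.trans hδT⟩
      have hmem₂ : ∀ τ ∈ Icc sm (sm + δ), u₂ τ ∈ O := by
        intro τ hτ
        apply hUsub
        refine ⟨hball ?_, hsubI hτ⟩
        have hδle : δ ≤ δ₀/2 := by rw [hδdef]; exact min_le_left _ _
        rw [Metric.mem_ball, Real.dist_eq, abs_sub_lt_iff]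
        constructor
        · linarith [hτ.2]
        · linarith [hτ.1]
      have hIciD : ∀ (v : ℝ → Fin 2 → ℝ),
          (∀ s ∈ Icc (0:ℝ) T, HasDerivWithinAt v (F s (v s)) (Icc 0 T) s) →
          ∀ t ∈ Ico sm (sm + δ), HasDerivWithinAt v (F t (v t)) (Ici t) t := by
        intro v hv t ht
        have htI : t ∈ Ico (0:ℝ) T :=
          ⟨hsm0.trans ht.1, lt_of_lt_of_le ht.2 hδT⟩
        exact (hv t (Ico_subset_Icc_self htI)).mono_of_mem_nhdsWithin
          (Icc_mem_nhdsGE_of_mem htI)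
      have heqOn : EqOn u₂ u (Icc sm (sm + δ)) := by
        apply ODE_solution_unique_of_mem_Icc_right (fun t _ => hFlip t)
          (hu₂cont.mono hsubI) (hIciD u₂ hu₂D)
          (fun t ht => hOB (hmem₂ t (Ico_subset_Icc_self ht)))
          (hucont.mono hsubI) (hIciD u huF)
          (fun t ht => huB t (hsubI (Ico_subset_Icc_self ht)))
          (hsmeq sm ⟨hsm0, le_rfl⟩)
      have hZmem : sm + δ ∈ Z := by
        refine ⟨⟨by linarith, hδT⟩, ?_⟩
        intro τ hτ
        rcases le_total τ sm with h | h
        · exact hsmeq τ ⟨hτ.1, h⟩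
        · exact heqOn ⟨h, hτ.2⟩
      have := le_csSup hZbdd hZmem
      simp only [← hsmdef] at this
      linarith
    -- conclude
    intro i t ht
    have hTt : T - t ∈ Icc (0:ℝ) T := hmaps ht
    have := hsmeq (T - t) (by rw [hsmT']; exact hTt)
    have h2 : u₂ (T - t) i = u (T - t) i := by rw [this]
    simp only [hu₂def] at h2
    rw [show T - (T - t) = t by ring] at h2
    simpa only [hgdef] using h2
  ------------------------------------------------------------------ assemble
  refine ⟨g, ⟨hreg, hODE, hterm⟩, huniq, a, M, ha0, by linarith, ?_⟩
  intro i t ht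
  have := hbox (T - t) (hmaps ht) i
  simp only [hgdef]
  exact this

end Stmt7Aux

/-- Remark 4.3 of the paper: existence and uniqueness of a continuously differentiable,
uniformly bounded (above and below by positive constants) solution `ĝ` of the
pre-commitment ODE system with a single discount rate `ρ > 0` and terminal value `1`. -/
theorem stmt_7 (T γ ρ : ℝ) (hT : 0 < T) (hγ : γ < 1) (hγ0 : γ ≠ 0) (hρ : 0 < ρ)
    (r μ σ : ℝ → Fin 2 → ℝ)
    (hr : ∀ i, ContinuousOn (fun t => r t i) (Set.Icc 0 T))
    (hμ : ∀ i, ContinuousOn (fun t => μ t i) (Set.Icc 0 T))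
    (hσc : ∀ i, ContinuousOn (fun t => σ t i) (Set.Icc 0 T))
    (hσ : ∀ t i, 0 < σ t i)
    (lam : Fin 2 → ℝ) (hlam : ∀ i, 0 ≤ lam i) :
    ∃ g : ℝ → Fin 2 → ℝ,
      IsPrecommitSol T γ ρ (betaFn γ r μ σ) lam g ∧
      (∀ g₂ : ℝ → Fin 2 → ℝ, IsPrecommitSol T γ ρ (betaFn γ r μ σ) lam g₂ →
        ∀ i : Fin 2, ∀ t ∈ Set.Icc 0 T, g₂ t i = g t i) ∧
      ∃ m M : ℝ, 0 < m ∧ m ≤ M ∧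
        ∀ i : Fin 2, ∀ t ∈ Set.Icc 0 T, m ≤ g t i ∧ g t i ≤ M := by
  have hγ1 : γ - 1 < 0 := by linarith
  have hq : γ / (γ - 1) < 1 := by
    rw [div_lt_one_of_neg hγ1]; linarith
  have hc1 : 0 < 1 - γ := by linarith
  have hα : ∀ i : Fin 2, ContinuousOn
      (fun t => betaFn γ r μ σ t i - ρ - lam i) (Set.Icc 0 T) := by
    intro i
    apply ContinuousOn.sub _ continuousOn_const
    apply ContinuousOn.sub _ continuousOn_const
    unfold betaFn
    apply ContinuousOn.add
    · exact continuousOn_const.mul (hr i)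
    · apply ContinuousOn.div
      · exact continuousOn_const.mul ((hμ i).pow 2)
      · exact (continuousOn_const.mul ((hσc i).pow 2)).mul continuousOn_const
      · intro t _
        have hs := hσ t i
        have : 0 < 2 * σ t i ^ 2 * (1 - γ) := by positivity
        exact this.ne'
  obtain ⟨g, hsol, huniq, m, M, hm, hmM, hbnd⟩ :=
    Stmt7Aux.aux T hT (γ/(γ-1)) (1-γ) hq hc1
      (fun t i => betaFn γ r μ σ t i - ρ - lam i) hα lam hlam
  exact ⟨g, hsol, huniq, m, M, hm, hmM, hbnd⟩
end

section
/- Let U : (0,∞) → ℝ be continuous and F₁, F₂ : [0,T] × (0,∞) × {0,1} → ℝ be continuous. Suppose f, defined on {(t,s) : 0 ≤ t ≤ s ≤ T} × (0,∞) × {0,1}, is continuous with continuous partial derivatives ∂f/∂t, ∂f/∂x, ∂²f/∂x², solves for t < s: ∂f/∂t(t,s,x,i) + (r(t,i)x + μ(t,i)F₁(t,x,i) − F₂(t,x,i))·∂f/∂x(t,s,x,i) + (σ(t,i)²F₁(t,x,i)²/2)·∂²f/∂x²(t,s,x,i) + λ_{ii} f(t,s,x,i) + λ_{ij} f(t,s,x,j)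 = 0 with f(t,t,x,i) = U(F₂(t,x,i)); and suppose h : [0,T] × (0,∞) × {0,1} → ℝ is C^{1,2} and solves ∂h/∂t(t,x,i) + (r(t,i)x + μ(t,i)F₁(t,x,i) − F₂(t,x,i))·∂h/∂x(t,x,i) + (σ(t,i)²F₁(t,x,i)²/2)·∂²h/∂x²(t,x,i) + λ_{ii} h(t,x,i) + λ_{ij} h(t,x,j) = 0 with h(T,x,i) = U(x). Define v(t,x,i) = ∫_t^T e^{−ρ_i(s−t)} f(t,s,x,i) ds + e^{−ρ_i(T−t)} h(t,x,i) and v̄(t,x,i) = ∫_t^T e^{−ρ_j(s−t)} f(t,s,x,i) ds + e^{−ρ_j(T−t)} h(t,x,i) (j = 1−i). Then for every t ∈ [0,T), x > 0, i ∈ {0,1}, j = 1−i: ∂v/∂t(t,x,i) + (r(t,i)x + μ(t,i)F₁(t,x,i) − F₂(t,x,i))·∂v/∂x(t,x,i) + (σ(t,i)²F₁(t,x,i)²/2)·∂²v/∂x²(t,x,i) + U(F₂(t,x,i)) + λ_{ii}·v(t,x,i) − ρ_i·v(t,x,i) + λ_{ij}·v̄(t,x,j) = 0, and ∂v̄/∂t(t,x,i)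 + (r(t,i)x + μ(t,i)F₁(t,x,i) − F₂(t,x,i))·∂v̄/∂x(t,x,i) + (σ(t,i)²F₁(t,x,i)²/2)·∂²v̄/∂x²(t,x,i) + U(F₂(t,x,i)) + λ_{ii}·v̄(t,x,i) − ρ_j·v̄(t,x,i) + λ_{ij}·v(t,x,j) = 0, with boundary conditions v(T,x,i) = v̄(T,x,i) = U(x). -/
open MeasureTheory Set Filter Topology intervalIntegral

private lemma abs_min_sub_min_le (a b c : ℝ) : |min a c - min b c| ≤ |a - b| := by
  rcases le_total a c with h1 | h1 <;> rcases le_total b c with h2 | h2 <;>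
    simp only [min_eq_left, min_eq_right, h1, h2] <;>
    [exact le_refl _;
     (rw [abs_of_nonpos (by linarith), abs_of_nonpos (by linarith)]; linarith);
     (rw [abs_of_nonneg (by linarith), abs_of_nonneg (by linarith)]; linarith);
     simp [abs_nonneg]]

/-- Key lemma: derivative (within `[0,T]`) of `t ↦ ∫_t^T g(t,s) ds`. -/
private lemma hasDerivWithinAt_movingIntegral
    {T t₀ : ℝ} (ht₀ : t₀ ∈ Set.Ico 0 T)
    {g g' : ℝ → ℝ → ℝ}
    (hgc : ContinuousOn (fun p : ℝ × ℝ => g p.1 p.2)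
      {p : ℝ × ℝ | 0 ≤ p.1 ∧ p.1 ≤ p.2 ∧ p.2 ≤ T})
    (hg'c : ContinuousOn (fun p : ℝ × ℝ => g' p.1 p.2)
      {p : ℝ × ℝ | 0 ≤ p.1 ∧ p.1 ≤ p.2 ∧ p.2 ≤ T})
    (hder : ∀ s ∈ Set.Icc (0:ℝ) T, ∀ τ ∈ Set.Icc (0:ℝ) s,
      HasDerivWithinAt (fun τ => g τ s) (g' τ s) (Set.Icc 0 s) τ) :
    HasDerivWithinAt (fun t => ∫ s in t..T, g t s)
      ((∫ s in t₀..T, g' t₀ s) - g t₀ t₀) (Set.Icc 0 T) t₀ := by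
  obtain ⟨ht₀0, ht₀T⟩ := ht₀
  have hT : (0:ℝ) ≤ T := le_trans ht₀0 ht₀T.le
  set K : Set (ℝ × ℝ) := {p : ℝ × ℝ | 0 ≤ p.1 ∧ p.1 ≤ p.2 ∧ p.2 ≤ T} with hK
  -- compactness of the triangle K
  have hKc : IsCompact K := by
    have hcl : IsClosed K := by
      apply IsClosed.inter (isClosed_le continuous_const continuous_fst)
      exact IsClosed.inter (isClosed_le continuous_fst continuous_snd)
        (isClosed_le continuous_snd continuous_const)
    have hsub : K ⊆ Set.Icc ((0:ℝ),(0:ℝ)) (T,T) := by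
      rintro ⟨a, b⟩ ⟨h1, h2, h3⟩
      exact ⟨⟨h1, le_trans h1 h2⟩, ⟨le_trans h2 h3, h3⟩⟩
    exact (isCompact_Icc).of_isClosed_subset hcl hsub
  -- the extension G
  set G : ℝ → ℝ → ℝ := fun t s => g (min t s) s with hG
  have hmapsto : Set.MapsTo (fun p : ℝ × ℝ => (min p.1 p.2, p.2))
      (Set.Icc 0 T ×ˢ Set.Icc 0 T) K := by
    rintro ⟨a, b⟩ ⟨⟨ha0, haT⟩, ⟨hb0, hbT⟩⟩
    exact ⟨le_min ha0 hb0, min_le_right _ _, hbT⟩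
  have hGc : ContinuousOn (fun p : ℝ × ℝ => G p.1 p.2) (Set.Icc 0 T ×ˢ Set.Icc 0 T) := by
    exact hgc.comp ((continuous_fst.min continuous_snd).prodMk continuous_snd).continuousOn
      hmapsto
  -- bound on g'
  obtain ⟨M₀, hM₀⟩ := hKc.exists_bound_of_continuousOn hg'c
  set M : ℝ := max M₀ 0 with hM
  have hM0 : 0 ≤ M := le_max_right _ _
  have hMb : ∀ p ∈ K, |g' p.1 p.2| ≤ M := fun p hp =>
    le_trans (hM₀ p hp) (le_max_left _ _)
  -- Lipschitz property of G in t
  have hGlip : ∀ s ∈ Set.Icc (0:ℝ) T, ∀ t ∈ Set.Icc (0:ℝ) T, ∀ t' ∈ Set.Icc (0:ℝ) T,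
      |G t s - G t' s| ≤ M * |t - t'| := by
    intro s hs t ht t' ht'
    have hlip : ∀ a ∈ Set.Icc (0:ℝ) s, ∀ b ∈ Set.Icc (0:ℝ) s,
        |g b s - g a s| ≤ M * |b - a| := by
      intro a ha b hb
      have := Convex.norm_image_sub_le_of_norm_hasDerivWithin_le
        (f := fun τ => g τ s) (f' := fun τ => g' τ s) (s := Set.Icc 0 s)
        (fun τ hτ => hder s hs τ hτ)
        (fun τ hτ => by
          simpa [Real.norm_eq_abs] using hMb (τ, s) ⟨hτ.1, hτ.2, hs.2⟩)
        (convex_Icc 0 s) ha hb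
      simpa [Real.norm_eq_abs] using this
    have h1 : min t s ∈ Set.Icc (0:ℝ) s := ⟨le_min ht.1 hs.1, min_le_right _ _⟩
    have h2 : min t' s ∈ Set.Icc (0:ℝ) s := ⟨le_min ht'.1 hs.1, min_le_right _ _⟩
    calc |G t s - G t' s| ≤ M * |min t s - min t' s| := hlip _ h2 _ h1
    _ ≤ M * |t - t'| := by
        exact mul_le_mul_of_nonneg_left (abs_min_sub_min_le t t' s) hM0
  -- slice continuity & integrability of G
  have hGslice : ∀ t ∈ Set.Icc (0:ℝ) T, ContinuousOn (fun s => G t s) (Set.Icc 0 T) := by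
    intro t ht
    exact hGc.comp (Continuous.continuousOn (continuous_const.prodMk continuous_id))
      (fun s hs => ⟨ht, hs⟩)
  have hGint : ∀ t ∈ Set.Icc (0:ℝ) T, ∀ a ∈ Set.Icc (0:ℝ) T, ∀ b ∈ Set.Icc (0:ℝ) T,
      IntervalIntegrable (fun s => G t s) MeasureTheory.volume a b := by
    intro t ht a ha b hb
    exact ((hGslice t ht).mono (Set.uIcc_subset_Icc ha hb)).intervalIntegrable
  have ht₀Icc : t₀ ∈ Set.Icc (0:ℝ) T := ⟨ht₀0, ht₀T.le⟩
  set Φ : ℝ → ℝ := fun t => ∫ s in t₀..T, G t s with hΦdef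
  set Ψ : ℝ → ℝ := fun t => ∫ s in t₀..t, G t s with hΨdef
  have hTIcc : T ∈ Set.Icc (0:ℝ) T := ⟨hT, le_refl T⟩
  have hsplit : ∀ t ∈ Set.Icc (0:ℝ) T, (∫ s in t..T, g t s) = Φ t - Ψ t := by
    intro t ht
    have h1 : (∫ s in t..T, g t s) = ∫ s in t..T, G t s := by
      apply intervalIntegral.integral_congr
      intro s hs
      rw [Set.uIcc_of_le ht.2] at hs
      simp only [hG, min_eq_left hs.1]
    rw [h1, hΦdef, hΨdef]
    exact (intervalIntegral.integral_interval_sub_left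
      (hGint t ht t₀ ht₀Icc T hTIcc) (hGint t ht t₀ ht₀Icc t ht)).symm
  -- derivative of Φ
  have hΦder : HasDerivWithinAt Φ (∫ s in t₀..T, g' t₀ s) (Set.Icc 0 T) t₀ := by
    rw [hasDerivWithinAt_iff_tendsto_slope]
    have hev : ∀ᶠ t in 𝓝[Set.Icc (0:ℝ) T \ {t₀}] t₀, t ∈ Set.Icc (0:ℝ) T \ {t₀} :=
      self_mem_nhdsWithin
    have hDCT : Tendsto (fun t => ∫ s in t₀..T, (t - t₀)⁻¹ * (G t s - G t₀ s))
        (𝓝[Set.Icc (0:ℝ) T \ {t₀}] t₀) (𝓝 (∫ s in t₀..T, g' t₀ s)) := by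
      apply intervalIntegral.tendsto_integral_filter_of_dominated_convergence
        (bound := fun _ => M)
      · filter_upwards [hev] with t ht
        apply ContinuousOn.aestronglyMeasurable _ measurableSet_uIoc
        have : Set.uIoc t₀ T ⊆ Set.Icc (0:ℝ) T := by
          rw [Set.uIoc_of_le ht₀T.le]
          exact (Set.Ioc_subset_Icc_self).trans (Set.Icc_subset_Icc ht₀0 (le_refl T))
        exact (((hGslice t ht.1).sub (hGslice t₀ ht₀Icc)).const_smul ((t - t₀)⁻¹)).mono this
      · filter_upwards [hev] with t ht
        apply MeasureTheory.ae_of_all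
        intro s hs
        have hsI : s ∈ Set.Icc (0:ℝ) T := by
          rw [Set.uIoc_of_le ht₀T.le] at hs
          exact ⟨le_trans ht₀0 hs.1.le, hs.2⟩
        have hne : t - t₀ ≠ 0 := sub_ne_zero.2 (by exact fun hh => ht.2 hh)
        rw [Real.norm_eq_abs, abs_mul, abs_inv]
        calc |t - t₀|⁻¹ * |G t s - G t₀ s| ≤ |t - t₀|⁻¹ * (M * |t - t₀|) := by
              apply mul_le_mul_of_nonneg_left (hGlip s hsI t ht.1 t₀ ht₀Icc)
              positivity
        _ = M := by field_simp
      · exact intervalIntegrable_const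
      · apply MeasureTheory.ae_of_all
        intro s hs
        rw [Set.uIoc_of_le ht₀T.le] at hs
        have hsIcc : s ∈ Set.Icc (0:ℝ) T := ⟨le_trans ht₀0 hs.1.le, hs.2⟩
        have hd : HasDerivWithinAt (fun t => G t s) (g' t₀ s) (Set.Icc 0 T) t₀ := by
          have hsub : Set.Icc (0:ℝ) T ∩ Set.Iio s ⊆ Set.Icc 0 s := by
            rintro τ ⟨⟨hτ0, _⟩, hτs⟩
            exact ⟨hτ0, le_of_lt hτs⟩
          have h1 : HasDerivWithinAt (fun τ => g τ s) (g' t₀ s)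
              (Set.Icc (0:ℝ) T ∩ Set.Iio s) t₀ :=
            (hder s hsIcc t₀ ⟨ht₀0, hs.1.le⟩).mono hsub
          have h2 : HasDerivWithinAt (fun τ => G τ s) (g' t₀ s)
              (Set.Icc (0:ℝ) T ∩ Set.Iio s) t₀ := by
            apply h1.congr
            · intro τ hτ
              simp only [hG, min_eq_left (le_of_lt (Set.mem_Iio.mp hτ.2))]
            · simp only [hG, min_eq_left hs.1.le]
          exact h2.mono_of_mem_nhdsWithin
            (inter_mem_nhdsWithin _ (Iio_mem_nhds hs.1))
        rw [hasDerivWithinAt_iff_tendsto_slope] at hd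
        apply hd.congr
        intro t
        rw [slope_def_field, div_eq_inv_mul]
    apply hDCT.congr'
    filter_upwards [hev] with t ht
    have hsub : (∫ s in t₀..T, (t - t₀)⁻¹ * (G t s - G t₀ s))
        = (t - t₀)⁻¹ * ∫ s in t₀..T, (G t s - G t₀ s) := by
      exact intervalIntegral.integral_const_mul _ _
    rw [hsub, intervalIntegral.integral_sub (hGint t ht.1 t₀ ht₀Icc T hTIcc)
      (hGint t₀ ht₀Icc t₀ ht₀Icc T hTIcc)]
    rw [slope_def_field, div_eq_inv_mul]
  -- derivative of Ψ
  have hΨder : HasDerivWithinAt Ψ (g t₀ t₀) (Set.Icc 0 T) t₀ := by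
    rw [hasDerivWithinAt_iff_tendsto_slope]
    rw [Metric.tendsto_nhdsWithin_nhds]
    intro ε hε
    have hc : ContinuousWithinAt (fun p : ℝ × ℝ => G p.1 p.2)
        (Set.Icc 0 T ×ˢ Set.Icc 0 T) (t₀, t₀) := hGc (t₀, t₀) ⟨ht₀Icc, ht₀Icc⟩
    rw [Metric.continuousWithinAt_iff] at hc
    obtain ⟨δ, hδ0, hδ⟩ := hc (ε/2) (by linarith)
    refine ⟨δ, hδ0, ?_⟩
    intro t ht hdist
    have htIcc : t ∈ Set.Icc (0:ℝ) T := ht.1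
    have hne : t - t₀ ≠ 0 := sub_ne_zero.2 (fun hh => ht.2 hh)
    have habs : 0 < |t - t₀| := abs_pos.2 hne
    -- key integral bound
    have hbound : |Ψ t - (t - t₀) * G t₀ t₀| ≤ ε/2 * |t - t₀| := by
      have heq : Ψ t - (t - t₀) * G t₀ t₀ = ∫ s in t₀..t, (G t s - G t₀ t₀) := by
        rw [intervalIntegral.integral_sub (hGint t htIcc t₀ ht₀Icc t htIcc)
          intervalIntegrable_const, intervalIntegral.integral_const, smul_eq_mul]
      rw [heq]
      have := intervalIntegral.norm_integral_le_of_norm_le_const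
        (C := ε/2) (f := fun s => G t s - G t₀ t₀) (a := t₀) (b := t) ?_
      · simpa [Real.norm_eq_abs, abs_sub_comm t t₀] using this
      · intro s hs
        have hsmem : |s - t₀| ≤ |t - t₀| := by
          rw [Set.uIoc] at hs
          rcases le_total t₀ t with hle | hle
          · rw [abs_of_nonneg (by simp [min_eq_left hle] at hs; linarith [hs.1]),
              abs_of_nonneg (by linarith)]
            simp [min_eq_left hle, max_eq_right hle] at hs
            linarith [hs.2]
          · rw [abs_of_nonpos (by simp [max_eq_left hle] at hs; linarith [hs.2]),
              abs_of_nonpos (by linarith)]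
            simp [min_eq_right hle, max_eq_left hle] at hs
            linarith [hs.1]
        have hsIcc : s ∈ Set.Icc (0:ℝ) T := by
          rcases le_total t₀ t with hle | hle
          · rw [Set.uIoc_of_le hle] at hs
            exact ⟨le_trans ht₀0 hs.1.le, le_trans hs.2 htIcc.2⟩
          · rw [Set.uIoc_of_ge hle] at hs
            exact ⟨le_trans htIcc.1 hs.1.le, le_trans hs.2 ht₀T.le⟩
        have hp : ((t, s) : ℝ × ℝ) ∈ Set.Icc (0:ℝ) T ×ˢ Set.Icc (0:ℝ) T := ⟨htIcc, hsIcc⟩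
        have hdp : dist ((t, s) : ℝ × ℝ) (t₀, t₀) < δ := by
          rw [Prod.dist_eq]
          apply max_lt
          · exact hdist
          · calc dist s t₀ = |s - t₀| := rfl
            _ ≤ |t - t₀| := hsmem
            _ < δ := hdist
        have := hδ hp hdp
        rw [Real.dist_eq] at this
        rw [Real.norm_eq_abs]
        exact le_of_lt this
    -- convert to slope bound
    rw [slope_def_field, hΨdef]
    simp only [intervalIntegral.integral_same]
    rw [Real.dist_eq]
    have : |Ψ t / (t - t₀) - G t₀ t₀| ≤ ε/2 := by
      rw [div_sub' hne, abs_div]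
      rw [div_le_iff₀ habs]
      calc |Ψ t - (t - t₀) * G t₀ t₀| ≤ ε/2 * |t - t₀| := by
            have : Ψ t - (t - t₀) * G t₀ t₀ = Ψ t - G t₀ t₀ * (t - t₀) := by ring
            rw [← this] at *; exact hbound
      _ = ε/2 * |t - t₀| := rfl
    have hGtt : G t₀ t₀ = g t₀ t₀ := by simp [hG]
    rw [sub_zero, ← hGtt]
    linarith
  -- combine
  have hcomb := hΦder.sub hΨder
  apply hcomb.congr
  · intro t ht
    exact hsplit t ht
  · exact hsplit t₀ ht₀Icc

/-- Differentiation in the parameter `y ∈ (0,∞)` under an interval integral. -/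
private lemma hasDerivAt_paramIntegral
    {a b : ℝ} (hab : a ≤ b) {F Fx : ℝ → ℝ → ℝ}
    (hFc : ContinuousOn (fun p : ℝ × ℝ => F p.1 p.2) (Set.Icc a b ×ˢ Set.Ioi 0))
    (hFxc : ContinuousOn (fun p : ℝ × ℝ => Fx p.1 p.2) (Set.Icc a b ×ˢ Set.Ioi 0))
    (hd : ∀ s ∈ Set.Icc a b, ∀ y ∈ Set.Ioi (0:ℝ), HasDerivAt (fun y => F s y) (Fx s y) y)
    {x : ℝ} (hx : 0 < x) :
    HasDerivAt (fun y => ∫ s in a..b, F s y) (∫ s in a..b, Fx s x) x := by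
  have hε : (0:ℝ) < x/2 := by linarith
  have hsliceF : ∀ y ∈ Set.Ioi (0:ℝ), ContinuousOn (fun s => F s y) (Set.Icc a b) := by
    intro y hy
    exact hFc.comp (Continuous.continuousOn (continuous_id.prodMk continuous_const))
      (fun s hs => ⟨hs, hy⟩)
  have hsliceFx : ∀ y ∈ Set.Ioi (0:ℝ), ContinuousOn (fun s => Fx s y) (Set.Icc a b) := by
    intro y hy
    exact hFxc.comp (Continuous.continuousOn (continuous_id.prodMk continuous_const))
      (fun s hs => ⟨hs, hy⟩)
  -- bound for Fx on compact rectangle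
  have hcomp : IsCompact (Set.Icc a b ×ˢ Set.Icc (x/2) (x + x/2)) :=
    isCompact_Icc.prod isCompact_Icc
  have hsubset : Set.Icc a b ×ˢ Set.Icc (x/2) (x + x/2) ⊆ Set.Icc a b ×ˢ Set.Ioi 0 := by
    rintro ⟨s, y⟩ ⟨hs, hy⟩
    exact ⟨hs, lt_of_lt_of_le hε hy.1⟩
  obtain ⟨C, hC⟩ := hcomp.exists_bound_of_continuousOn (hFxc.mono hsubset)
  have hIoc : Set.uIoc a b ⊆ Set.Icc a b := by
    rw [Set.uIoc_of_le hab]; exact Set.Ioc_subset_Icc_self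
  have := intervalIntegral.hasDerivAt_integral_of_dominated_loc_of_deriv_le
    (μ := MeasureTheory.volume) (a := a) (b := b)
    (F := fun y s => F s y) (F' := fun y s => Fx s y) (x₀ := x)
    (bound := fun _ => C) (s := Metric.ball x (x/2)) (Metric.ball_mem_nhds x hε) ?_ ?_ ?_ ?_ ?_ ?_
  · exact this.2
  · filter_upwards [Metric.ball_mem_nhds x hε] with y hy
    have hy0 : 0 < y := by
      rw [Metric.mem_ball, Real.dist_eq] at hy
      have := abs_lt.1 hy
      linarith [this.1]
    exact ((hsliceF y hy0).mono hIoc).aestronglyMeasurable measurableSet_uIoc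
  · exact ((hsliceF x hx).mono (by rw [Set.uIcc_of_le hab])).intervalIntegrable
  · exact ((hsliceFx x hx).mono hIoc).aestronglyMeasurable measurableSet_uIoc
  · apply MeasureTheory.ae_of_all
    intro s hs y hy
    rw [Metric.mem_ball, Real.dist_eq] at hy
    have := abs_lt.1 hy
    exact hC (s, y) ⟨hIoc hs, ⟨by linarith [this.1], by linarith [this.2]⟩⟩
  · exact intervalIntegrable_const
  · apply MeasureTheory.ae_of_all
    intro s hs y hy
    rw [Metric.mem_ball, Real.dist_eq] at hy
    have := abs_lt.1 hy
    exact hd s (hIoc hs) y (by simp only [Set.mem_Ioi]; linarith [this.1])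

/-- The core computation: the extended HJB equation for `w` built with discount rate `ρ'`. -/
private lemma key_eq (T : ℝ)
    (r μ σ : ℝ → Fin 2 → ℝ)
    (lam : Fin 2 → ℝ)
    (U : ℝ → ℝ)
    (F₁ F₂ : ℝ → ℝ → Fin 2 → ℝ)
    (f f_t f_x f_xx : ℝ → ℝ → ℝ → Fin 2 → ℝ)
    (h h_t h_x h_xx : ℝ → ℝ → Fin 2 → ℝ)
    (hfc : ∀ i, ContinuousOn (fun p : ℝ × ℝ × ℝ => f p.1 p.2.1 p.2.2 i)
      {p : ℝ × ℝ × ℝ | 0 ≤ p.1 ∧ p.1 ≤ p.2.1 ∧ p.2.1 ≤ T ∧ 0 < p.2.2})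
    (hftc : ∀ i, ContinuousOn (fun p : ℝ × ℝ × ℝ => f_t p.1 p.2.1 p.2.2 i)
      {p : ℝ × ℝ × ℝ | 0 ≤ p.1 ∧ p.1 ≤ p.2.1 ∧ p.2.1 ≤ T ∧ 0 < p.2.2})
    (hfxc : ∀ i, ContinuousOn (fun p : ℝ × ℝ × ℝ => f_x p.1 p.2.1 p.2.2 i)
      {p : ℝ × ℝ × ℝ | 0 ≤ p.1 ∧ p.1 ≤ p.2.1 ∧ p.2.1 ≤ T ∧ 0 < p.2.2})
    (hfxxc : ∀ i, ContinuousOn (fun p : ℝ × ℝ × ℝ => f_xx p.1 p.2.1 p.2.2 i)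
      {p : ℝ × ℝ × ℝ | 0 ≤ p.1 ∧ p.1 ≤ p.2.1 ∧ p.2.1 ≤ T ∧ 0 < p.2.2})
    (hft : ∀ i : Fin 2, ∀ x ∈ Set.Ioi (0 : ℝ), ∀ s ∈ Set.Icc (0 : ℝ) T, ∀ t ∈ Set.Icc 0 s,
      HasDerivWithinAt (fun τ => f τ s x i) (f_t t s x i) (Set.Icc 0 s) t)
    (hfx : ∀ i : Fin 2, ∀ t s : ℝ, 0 ≤ t → t ≤ s → s ≤ T → ∀ x ∈ Set.Ioi (0 : ℝ),
      HasDerivAt (fun y => f t s y i) (f_x t s x i) x)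
    (hfxx : ∀ i : Fin 2, ∀ t s : ℝ, 0 ≤ t → t ≤ s → s ≤ T → ∀ x ∈ Set.Ioi (0 : ℝ),
      HasDerivAt (fun y => f_x t s y i) (f_xx t s x i) x)
    (hfpde : ∀ i : Fin 2, ∀ t s x : ℝ, 0 ≤ t → t < s → s ≤ T → 0 < x →
      f_t t s x i + (r t i * x + μ t i * F₁ t x i - F₂ t x i) * f_x t s x i
        + σ t i ^ 2 * F₁ t x i ^ 2 / 2 * f_xx t s x i
        + (-lam i) * f t s x i + lam i * f t s x (1 - i) = 0)
    (hfbd : ∀ i : Fin 2, ∀ t x : ℝ, 0 ≤ t → t ≤ T → 0 < x → f t t x i = U (F₂ t x i))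
    (hht : ∀ i : Fin 2, ∀ x ∈ Set.Ioi (0 : ℝ), ∀ t ∈ Set.Icc (0 : ℝ) T,
      HasDerivWithinAt (fun τ => h τ x i) (h_t t x i) (Set.Icc 0 T) t)
    (hhx : ∀ i : Fin 2, ∀ t ∈ Set.Icc (0 : ℝ) T, ∀ x ∈ Set.Ioi (0 : ℝ),
      HasDerivAt (fun y => h t y i) (h_x t x i) x)
    (hhxx : ∀ i : Fin 2, ∀ t ∈ Set.Icc (0 : ℝ) T, ∀ x ∈ Set.Ioi (0 : ℝ),
      HasDerivAt (fun y => h_x t y i) (h_xx t x i) x)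
    (hhpde : ∀ i : Fin 2, ∀ t x : ℝ, 0 ≤ t → t ≤ T → 0 < x →
      h_t t x i + (r t i * x + μ t i * F₁ t x i - F₂ t x i) * h_x t x i
        + σ t i ^ 2 * F₁ t x i ^ 2 / 2 * h_xx t x i
        + (-lam i) * h t x i + lam i * h t x (1 - i) = 0)
    (ρ' : ℝ) (i : Fin 2) (t x : ℝ) (ht : t ∈ Set.Ico (0:ℝ) T) (hx : x ∈ Set.Ioi (0:ℝ)) :
    derivWithin (fun τ => (∫ s in τ..T, Real.exp (-ρ' * (s - τ)) * f τ s x i)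
        + Real.exp (-ρ' * (T - τ)) * h τ x i) (Set.Icc 0 T) t
      + (r t i * x + μ t i * F₁ t x i - F₂ t x i)
        * deriv (fun y => (∫ s in t..T, Real.exp (-ρ' * (s - t)) * f t s y i)
            + Real.exp (-ρ' * (T - t)) * h t y i) x
      + σ t i ^ 2 * F₁ t x i ^ 2 / 2
        * deriv (deriv (fun y => (∫ s in t..T, Real.exp (-ρ' * (s - t)) * f t s y i)
            + Real.exp (-ρ' * (T - t)) * h t y i)) x
      + U (F₂ t x i)
      + (-lam i) * ((∫ s in t..T, Real.exp (-ρ' * (s - t)) * f t s x i)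
          + Real.exp (-ρ' * (T - t)) * h t x i)
      - ρ' * ((∫ s in t..T, Real.exp (-ρ' * (s - t)) * f t s x i)
          + Real.exp (-ρ' * (T - t)) * h t x i)
      + lam i * ((∫ s in t..T, Real.exp (-ρ' * (s - t)) * f t s x (1 - i))
          + Real.exp (-ρ' * (T - t)) * h t x (1 - i)) = 0 := by
  obtain ⟨ht0, htT⟩ := ht
  have hx0 : (0:ℝ) < x := hx
  have hT0 : (0:ℝ) < T := lt_of_le_of_lt ht0 htT
  have htTle : t ≤ T := htT.le
  have htIcc : t ∈ Set.Icc (0:ℝ) T := ⟨ht0, htTle⟩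
  -- exp facts
  have hexpD : ∀ s : ℝ, HasDerivAt (fun τ => Real.exp (-ρ' * (s - τ)))
      (Real.exp (-ρ' * (s - t)) * ρ') t := by
    intro s
    have h1 : HasDerivAt (fun τ : ℝ => -ρ' * (s - τ)) ρ' t := by
      simpa using ((hasDerivAt_id t).const_sub s).const_mul (-ρ')
    simpa using h1.exp
  -- generic slice continuity on the triangle at fixed x
  have hslice : ∀ (φ : ℝ → ℝ → ℝ → Fin 2 → ℝ) (k : Fin 2),
      ContinuousOn (fun p : ℝ × ℝ × ℝ => φ p.1 p.2.1 p.2.2 k)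
        {p : ℝ × ℝ × ℝ | 0 ≤ p.1 ∧ p.1 ≤ p.2.1 ∧ p.2.1 ≤ T ∧ 0 < p.2.2} →
      ContinuousOn (fun p : ℝ × ℝ => Real.exp (-ρ' * (p.2 - p.1)) * φ p.1 p.2 x k)
        {p : ℝ × ℝ | 0 ≤ p.1 ∧ p.1 ≤ p.2 ∧ p.2 ≤ T} := by
    intro φ k hφ
    apply ContinuousOn.mul
    · exact (Real.continuous_exp.comp
        ((continuous_const.mul (continuous_snd.sub continuous_fst)))).continuousOn
    · exact hφ.comp
        (Continuous.continuousOn (by fun_prop : Continuous (fun p : ℝ × ℝ => (p.1, p.2, x))))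
        (fun p hp => ⟨hp.1, hp.2.1, hp.2.2, hx0⟩)
  -- generic integrability of s ↦ exp(-ρ'(s-t)) φ t s y k over [t,T], for y > 0
  have hgint : ∀ (φ : ℝ → ℝ → ℝ → Fin 2 → ℝ) (k : Fin 2) (y : ℝ), 0 < y →
      ContinuousOn (fun p : ℝ × ℝ × ℝ => φ p.1 p.2.1 p.2.2 k)
        {p : ℝ × ℝ × ℝ | 0 ≤ p.1 ∧ p.1 ≤ p.2.1 ∧ p.2.1 ≤ T ∧ 0 < p.2.2} →
      IntervalIntegrable (fun s => Real.exp (-ρ' * (s - t)) * φ t s y k)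
        MeasureTheory.volume t T := by
    intro φ k y hy hφ
    apply ContinuousOn.intervalIntegrable
    rw [Set.uIcc_of_le htTle]
    apply ContinuousOn.mul
    · exact (Real.continuous_exp.comp (continuous_const.mul
        (continuous_id.sub continuous_const))).continuousOn
    · exact hφ.comp
        (Continuous.continuousOn (by fun_prop : Continuous (fun s : ℝ => (t, s, y))))
        (fun s hs => ⟨ht0, hs.1, hs.2, hy⟩)
  -- generic 2D continuity on [t,T] × (0,∞)
  have hslice2 : ∀ (φ : ℝ → ℝ → ℝ → Fin 2 → ℝ) (k : Fin 2),
      ContinuousOn (fun p : ℝ × ℝ × ℝ => φ p.1 p.2.1 p.2.2 k)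
        {p : ℝ × ℝ × ℝ | 0 ≤ p.1 ∧ p.1 ≤ p.2.1 ∧ p.2.1 ≤ T ∧ 0 < p.2.2} →
      ContinuousOn (fun p : ℝ × ℝ => Real.exp (-ρ' * (p.1 - t)) * φ t p.1 p.2 k)
        (Set.Icc t T ×ˢ Set.Ioi 0) := by
    intro φ k hφ
    apply ContinuousOn.mul
    · exact (Real.continuous_exp.comp (continuous_const.mul
        (continuous_fst.sub continuous_const))).continuousOn
    · exact hφ.comp
        (Continuous.continuousOn (by fun_prop : Continuous (fun p : ℝ × ℝ => (t, p.1, p.2))))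
        (fun p hp => ⟨ht0, hp.1.1, hp.1.2, hp.2⟩)
    -- ===== t-derivative =====
  have hK1 : HasDerivWithinAt (fun τ => ∫ s in τ..T, Real.exp (-ρ' * (s - τ)) * f τ s x i)
      ((∫ s in t..T, (Real.exp (-ρ' * (s - t)) * ρ') * f t s x i
          + Real.exp (-ρ' * (s - t)) * f_t t s x i)
        - Real.exp (-ρ' * (t - t)) * f t t x i) (Set.Icc 0 T) t := by
    apply hasDerivWithinAt_movingIntegral (g := fun τ s => Real.exp (-ρ' * (s - τ)) * f τ s x i)
      (g' := fun τ s => (Real.exp (-ρ' * (s - τ)) * ρ') * f τ s x i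
          + Real.exp (-ρ' * (s - τ)) * f_t τ s x i) ⟨ht0, htT⟩
    · exact hslice f i (hfc i)
    · apply ContinuousOn.add
      · exact ContinuousOn.mul (ContinuousOn.mul
          ((Real.continuous_exp.comp
            ((continuous_const.mul (continuous_snd.sub continuous_fst)))).continuousOn)
          continuousOn_const)
          ((hfc i).comp (Continuous.continuousOn
            (by fun_prop : Continuous (fun p : ℝ × ℝ => (p.1, p.2, x))))
            (fun p hp => ⟨hp.1, hp.2.1, hp.2.2, hx0⟩))
      · exact hslice f_t i (hftc i)
    · intro s hs τ hτ
      have he : HasDerivAt (fun τ => Real.exp (-ρ' * (s - τ)))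
          (Real.exp (-ρ' * (s - τ)) * ρ') τ := by
        have h1 : HasDerivAt (fun τ' : ℝ => -ρ' * (s - τ')) ρ' τ := by
          simpa using ((hasDerivAt_id τ).const_sub s).const_mul (-ρ')
        simpa using h1.exp
      exact he.hasDerivWithinAt.mul (hft i x hx s hs τ hτ)
  have hK2 : HasDerivWithinAt (fun τ => Real.exp (-ρ' * (T - τ)) * h τ x i)
      (Real.exp (-ρ' * (T - t)) * ρ' * h t x i + Real.exp (-ρ' * (T - t)) * h_t t x i)
      (Set.Icc 0 T) t :=
    (hexpD T).hasDerivWithinAt.mul (hht i x hx t htIcc)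
  have hW : HasDerivWithinAt (fun τ => (∫ s in τ..T, Real.exp (-ρ' * (s - τ)) * f τ s x i)
      + Real.exp (-ρ' * (T - τ)) * h τ x i)
      (((∫ s in t..T, (Real.exp (-ρ' * (s - t)) * ρ') * f t s x i
          + Real.exp (-ρ' * (s - t)) * f_t t s x i)
        - Real.exp (-ρ' * (t - t)) * f t t x i)
       + (Real.exp (-ρ' * (T - t)) * ρ' * h t x i + Real.exp (-ρ' * (T - t)) * h_t t x i))
      (Set.Icc 0 T) t := hK1.add hK2
  have hDW : derivWithin (fun τ => (∫ s in τ..T, Real.exp (-ρ' * (s - τ)) * f τ s x i)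
      + Real.exp (-ρ' * (T - τ)) * h τ x i) (Set.Icc 0 T) t
      = ((∫ s in t..T, (Real.exp (-ρ' * (s - t)) * ρ') * f t s x i
          + Real.exp (-ρ' * (s - t)) * f_t t s x i)
        - Real.exp (-ρ' * (t - t)) * f t t x i)
       + (Real.exp (-ρ' * (T - t)) * ρ' * h t x i + Real.exp (-ρ' * (T - t)) * h_t t x i) :=
    hW.derivWithin (uniqueDiffOn_Icc hT0 t htIcc)
  have hftt : Real.exp (-ρ' * (t - t)) * f t t x i = U (F₂ t x i) := by
    rw [hfbd i t x ht0 htTle hx0, sub_self, mul_zero, Real.exp_zero, one_mul]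
  -- ===== x-derivatives =====
  have hK3 : ∀ y ∈ Set.Ioi (0:ℝ),
      HasDerivAt (fun y => (∫ s in t..T, Real.exp (-ρ' * (s - t)) * f t s y i)
          + Real.exp (-ρ' * (T - t)) * h t y i)
        ((∫ s in t..T, Real.exp (-ρ' * (s - t)) * f_x t s y i)
          + Real.exp (-ρ' * (T - t)) * h_x t y i) y := by
    intro y hy
    apply HasDerivAt.add
    · apply hasDerivAt_paramIntegral htTle (hslice2 f i (hfc i)) (hslice2 f_x i (hfxc i))
        _ hy
      intro s hs z hz
      exact (hfx i t s ht0 hs.1 hs.2 z hz).const_mul _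
    · exact (hhx i t htIcc y hy).const_mul _
  have hd1 : deriv (fun y => (∫ s in t..T, Real.exp (-ρ' * (s - t)) * f t s y i)
      + Real.exp (-ρ' * (T - t)) * h t y i) x
      = (∫ s in t..T, Real.exp (-ρ' * (s - t)) * f_x t s x i)
        + Real.exp (-ρ' * (T - t)) * h_x t x i := (hK3 x hx).deriv
  have hK4 : HasDerivAt (fun y => (∫ s in t..T, Real.exp (-ρ' * (s - t)) * f_x t s y i)
        + Real.exp (-ρ' * (T - t)) * h_x t y i)
      ((∫ s in t..T, Real.exp (-ρ' * (s - t)) * f_xx t s x i)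
        + Real.exp (-ρ' * (T - t)) * h_xx t x i) x := by
    apply HasDerivAt.add
    · apply hasDerivAt_paramIntegral htTle (hslice2 f_x i (hfxc i)) (hslice2 f_xx i (hfxxc i))
        _ hx0
      intro s hs z hz
      exact (hfxx i t s ht0 hs.1 hs.2 z hz).const_mul _
    · exact (hhxx i t htIcc x hx).const_mul _
  have hd2 : deriv (deriv (fun y => (∫ s in t..T, Real.exp (-ρ' * (s - t)) * f t s y i)
      + Real.exp (-ρ' * (T - t)) * h t y i)) x
      = (∫ s in t..T, Real.exp (-ρ' * (s - t)) * f_xx t s x i)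
        + Real.exp (-ρ' * (T - t)) * h_xx t x i := by
    have heq : deriv (fun y => (∫ s in t..T, Real.exp (-ρ' * (s - t)) * f t s y i)
        + Real.exp (-ρ' * (T - t)) * h t y i)
        =ᶠ[nhds x] (fun y => (∫ s in t..T, Real.exp (-ρ' * (s - t)) * f_x t s y i)
          + Real.exp (-ρ' * (T - t)) * h_x t y i) := by
      filter_upwards [Ioi_mem_nhds hx0] with y hy
      exact (hK3 y hy).deriv
    rw [heq.deriv_eq]
    exact hK4.deriv
  -- ===== integrability facts =====
  have Jf := hgint f i x hx0 (hfc i)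
  have Jft := hgint f_t i x hx0 (hftc i)
  have Jfx := hgint f_x i x hx0 (hfxc i)
  have Jfxx := hgint f_xx i x hx0 (hfxxc i)
  have Jfj := hgint f (1 - i) x hx0 (hfc (1 - i))
  -- split the t-derivative integral
  have hIg : (∫ s in t..T, (Real.exp (-ρ' * (s - t)) * ρ') * f t s x i
      + Real.exp (-ρ' * (s - t)) * f_t t s x i)
      = ρ' * (∫ s in t..T, Real.exp (-ρ' * (s - t)) * f t s x i)
        + ∫ s in t..T, Real.exp (-ρ' * (s - t)) * f_t t s x i := by
    have e1 : (fun s => (Real.exp (-ρ' * (s - t)) * ρ') * f t s x i)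
        = fun s => ρ' * (Real.exp (-ρ' * (s - t)) * f t s x i) := by
      funext s; ring
    rw [intervalIntegral.integral_add (by rw [e1]; exact Jf.const_mul ρ') Jft, e1,
      intervalIntegral.integral_const_mul]
  -- the combined f-integral vanishes by the PDE
  set D : ℝ := r t i * x + μ t i * F₁ t x i - F₂ t x i with hDdef
  set A : ℝ := σ t i ^ 2 * F₁ t x i ^ 2 / 2 with hAdef
  have hZ0 : (∫ s in t..T, (Real.exp (-ρ' * (s - t)) * f_t t s x i
      + D * (Real.exp (-ρ' * (s - t)) * f_x t s x i)
      + A * (Real.exp (-ρ' * (s - t)) * f_xx t s x i)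
      + (-lam i) * (Real.exp (-ρ' * (s - t)) * f t s x i)
      + lam i * (Real.exp (-ρ' * (s - t)) * f t s x (1 - i)))) = 0 := by
    have : (∫ s in t..T, (Real.exp (-ρ' * (s - t)) * f_t t s x i
        + D * (Real.exp (-ρ' * (s - t)) * f_x t s x i)
        + A * (Real.exp (-ρ' * (s - t)) * f_xx t s x i)
        + (-lam i) * (Real.exp (-ρ' * (s - t)) * f t s x i)
        + lam i * (Real.exp (-ρ' * (s - t)) * f t s x (1 - i))))
        = ∫ s in t..T, (0:ℝ) := by
      apply intervalIntegral.integral_congr_ae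
      apply MeasureTheory.ae_of_all
      intro s hs
      rw [Set.uIoc_of_le htTle] at hs
      have hp := hfpde i t s x ht0 hs.1 hs.2 hx0
      rw [hDdef, hAdef]
      linear_combination (Real.exp (-ρ' * (s - t))) * hp
    rw [this, intervalIntegral.integral_zero]
  have hZsplit : (∫ s in t..T, (Real.exp (-ρ' * (s - t)) * f_t t s x i
      + D * (Real.exp (-ρ' * (s - t)) * f_x t s x i)
      + A * (Real.exp (-ρ' * (s - t)) * f_xx t s x i)
      + (-lam i) * (Real.exp (-ρ' * (s - t)) * f t s x i)
      + lam i * (Real.exp (-ρ' * (s - t)) * f t s x (1 - i))))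
      = (∫ s in t..T, Real.exp (-ρ' * (s - t)) * f_t t s x i)
        + D * (∫ s in t..T, Real.exp (-ρ' * (s - t)) * f_x t s x i)
        + A * (∫ s in t..T, Real.exp (-ρ' * (s - t)) * f_xx t s x i)
        + (-lam i) * (∫ s in t..T, Real.exp (-ρ' * (s - t)) * f t s x i)
        + lam i * (∫ s in t..T, Real.exp (-ρ' * (s - t)) * f t s x (1 - i)) := by
    rw [intervalIntegral.integral_add (((Jft.add (Jfx.const_mul D)).add
        (Jfxx.const_mul A)).add (Jf.const_mul (-lam i))) (Jfj.const_mul (lam i)),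
      intervalIntegral.integral_add ((Jft.add (Jfx.const_mul D)).add
        (Jfxx.const_mul A)) (Jf.const_mul (-lam i)),
      intervalIntegral.integral_add (Jft.add (Jfx.const_mul D)) (Jfxx.const_mul A),
      intervalIntegral.integral_add Jft (Jfx.const_mul D),
      intervalIntegral.integral_const_mul, intervalIntegral.integral_const_mul,
      intervalIntegral.integral_const_mul, intervalIntegral.integral_const_mul]
  have hZ : (∫ s in t..T, Real.exp (-ρ' * (s - t)) * f_t t s x i)
        + D * (∫ s in t..T, Real.exp (-ρ' * (s - t)) * f_x t s x i)
        + A * (∫ s in t..T, Real.exp (-ρ' * (s - t)) * f_xx t s x i)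
        + (-lam i) * (∫ s in t..T, Real.exp (-ρ' * (s - t)) * f t s x i)
        + lam i * (∫ s in t..T, Real.exp (-ρ' * (s - t)) * f t s x (1 - i)) = 0 := by
    rw [← hZsplit]; exact hZ0
  -- ===== final assembly =====
  have hhp := hhpde i t x ht0 htTle hx0
  rw [← hDdef, ← hAdef] at hhp
  rw [hDW, hd1, hd2, hIg, hftt]
  linear_combination hZ + Real.exp (-ρ' * (T - t)) * hhp


/-- Forward direction of Lemma 3.1 of the paper: if `f(t,s,x,i)` and `h(t,x,i)` solve the
auxiliary linear parabolic equations (0PDEf) and (0PDE1) associated with the feedback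
strategy `(F₁,F₂)` (regime set `{0,1}`, `j = 1 − i`, `λ_{ij} = lam i`, `λ_{ii} = −lam i`),
then `v(t,x,i) = ∫_t^T e^{−ρ_i(s−t)} f(t,s,x,i) ds + e^{−ρ_i(T−t)} h(t,x,i)` and its
companion `v̄` (with `ρ_i` replaced by `ρ_j`) solve the extended HJB system
(zhang)–(zhang1), with boundary conditions `v(T,x,i) = v̄(T,x,i) = U(x)`.
The data `f_t, f_x, f_xx` (resp. `h_t, h_x, h_xx`) are the partial derivatives of `f`
(resp. `h`), assumed to exist and be continuous on the corresponding domains. -/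
theorem stmt_11 (T : ℝ) (hT : 0 < T)
    (r μ σ : ℝ → Fin 2 → ℝ) (hσ : ∀ t i, 0 < σ t i)
    (ρ : Fin 2 → ℝ) (hρ : ∀ i, 0 < ρ i)
    (lam : Fin 2 → ℝ) (hlam : ∀ i, 0 ≤ lam i)
    (U : ℝ → ℝ) (hU : ContinuousOn U (Set.Ioi 0))
    (F₁ F₂ : ℝ → ℝ → Fin 2 → ℝ)
    (hF₁ : ∀ i, ContinuousOn (fun p : ℝ × ℝ => F₁ p.1 p.2 i) (Set.Icc 0 T ×ˢ Set.Ioi 0))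
    (hF₂ : ∀ i, ContinuousOn (fun p : ℝ × ℝ => F₂ p.1 p.2 i) (Set.Icc 0 T ×ˢ Set.Ioi 0))
    (f f_t f_x f_xx : ℝ → ℝ → ℝ → Fin 2 → ℝ)
    (h h_t h_x h_xx : ℝ → ℝ → Fin 2 → ℝ)
    -- continuity of f and of its partial derivatives on {0 ≤ t ≤ s ≤ T} × (0,∞)
    (hfc : ∀ i, ContinuousOn (fun p : ℝ × ℝ × ℝ => f p.1 p.2.1 p.2.2 i)
      {p : ℝ × ℝ × ℝ | 0 ≤ p.1 ∧ p.1 ≤ p.2.1 ∧ p.2.1 ≤ T ∧ 0 < p.2.2})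
    (hftc : ∀ i, ContinuousOn (fun p : ℝ × ℝ × ℝ => f_t p.1 p.2.1 p.2.2 i)
      {p : ℝ × ℝ × ℝ | 0 ≤ p.1 ∧ p.1 ≤ p.2.1 ∧ p.2.1 ≤ T ∧ 0 < p.2.2})
    (hfxc : ∀ i, ContinuousOn (fun p : ℝ × ℝ × ℝ => f_x p.1 p.2.1 p.2.2 i)
      {p : ℝ × ℝ × ℝ | 0 ≤ p.1 ∧ p.1 ≤ p.2.1 ∧ p.2.1 ≤ T ∧ 0 < p.2.2})
    (hfxxc : ∀ i, ContinuousOn (fun p : ℝ × ℝ × ℝ => f_xx p.1 p.2.1 p.2.2 i)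
      {p : ℝ × ℝ × ℝ | 0 ≤ p.1 ∧ p.1 ≤ p.2.1 ∧ p.2.1 ≤ T ∧ 0 < p.2.2})
    -- partial derivatives of f
    (hft : ∀ i : Fin 2, ∀ x ∈ Set.Ioi (0 : ℝ), ∀ s ∈ Set.Icc (0 : ℝ) T, ∀ t ∈ Set.Icc 0 s,
      HasDerivWithinAt (fun τ => f τ s x i) (f_t t s x i) (Set.Icc 0 s) t)
    (hfx : ∀ i : Fin 2, ∀ t s : ℝ, 0 ≤ t → t ≤ s → s ≤ T → ∀ x ∈ Set.Ioi (0 : ℝ),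
      HasDerivAt (fun y => f t s y i) (f_x t s x i) x)
    (hfxx : ∀ i : Fin 2, ∀ t s : ℝ, 0 ≤ t → t ≤ s → s ≤ T → ∀ x ∈ Set.Ioi (0 : ℝ),
      HasDerivAt (fun y => f_x t s y i) (f_xx t s x i) x)
    -- the PDE (0PDEf) for f, for t < s, with boundary value f(t,t,x,i) = U(F₂(t,x,i))
    (hfpde : ∀ i : Fin 2, ∀ t s x : ℝ, 0 ≤ t → t < s → s ≤ T → 0 < x →
      f_t t s x i + (r t i * x + μ t i * F₁ t x i - F₂ t x i) * f_x t s x i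
        + σ t i ^ 2 * F₁ t x i ^ 2 / 2 * f_xx t s x i
        + (-lam i) * f t s x i + lam i * f t s x (1 - i) = 0)
    (hfbd : ∀ i : Fin 2, ∀ t x : ℝ, 0 ≤ t → t ≤ T → 0 < x → f t t x i = U (F₂ t x i))
    -- continuity of h and of its partial derivatives on [0,T] × (0,∞)
    (hhc : ∀ i, ContinuousOn (fun p : ℝ × ℝ => h p.1 p.2 i) (Set.Icc 0 T ×ˢ Set.Ioi 0))
    (hhtc : ∀ i, ContinuousOn (fun p : ℝ × ℝ => h_t p.1 p.2 i) (Set.Icc 0 T ×ˢ Set.Ioi 0))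
    (hhxc : ∀ i, ContinuousOn (fun p : ℝ × ℝ => h_x p.1 p.2 i) (Set.Icc 0 T ×ˢ Set.Ioi 0))
    (hhxxc : ∀ i, ContinuousOn (fun p : ℝ × ℝ => h_xx p.1 p.2 i) (Set.Icc 0 T ×ˢ Set.Ioi 0))
    -- partial derivatives of h
    (hht : ∀ i : Fin 2, ∀ x ∈ Set.Ioi (0 : ℝ), ∀ t ∈ Set.Icc (0 : ℝ) T,
      HasDerivWithinAt (fun τ => h τ x i) (h_t t x i) (Set.Icc 0 T) t)
    (hhx : ∀ i : Fin 2, ∀ t ∈ Set.Icc (0 : ℝ) T, ∀ x ∈ Set.Ioi (0 : ℝ),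
      HasDerivAt (fun y => h t y i) (h_x t x i) x)
    (hhxx : ∀ i : Fin 2, ∀ t ∈ Set.Icc (0 : ℝ) T, ∀ x ∈ Set.Ioi (0 : ℝ),
      HasDerivAt (fun y => h_x t y i) (h_xx t x i) x)
    -- the PDE (0PDE1) for h, with terminal value h(T,x,i) = U(x)
    (hhpde : ∀ i : Fin 2, ∀ t x : ℝ, 0 ≤ t → t ≤ T → 0 < x →
      h_t t x i + (r t i * x + μ t i * F₁ t x i - F₂ t x i) * h_x t x i
        + σ t i ^ 2 * F₁ t x i ^ 2 / 2 * h_xx t x i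
        + (-lam i) * h t x i + lam i * h t x (1 - i) = 0)
    (hhbd : ∀ i : Fin 2, ∀ x : ℝ, 0 < x → h T x i = U x) :
    -- the value function v and its companion v̄
    let v : ℝ → ℝ → Fin 2 → ℝ := fun t x i =>
      (∫ s in t..T, Real.exp (-ρ i * (s - t)) * f t s x i)
        + Real.exp (-ρ i * (T - t)) * h t x i
    let vb : ℝ → ℝ → Fin 2 → ℝ := fun t x i =>
      (∫ s in t..T, Real.exp (-ρ (1 - i) * (s - t)) * f t s x i)
        + Real.exp (-ρ (1 - i) * (T - t)) * h t x i
    (∀ i : Fin 2, ∀ t ∈ Set.Ico (0 : ℝ) T, ∀ x ∈ Set.Ioi (0 : ℝ),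
      derivWithin (fun τ => v τ x i) (Set.Icc 0 T) t
          + (r t i * x + μ t i * F₁ t x i - F₂ t x i) * deriv (fun y => v t y i) x
          + σ t i ^ 2 * F₁ t x i ^ 2 / 2 * deriv (deriv (fun y => v t y i)) x
          + U (F₂ t x i) + (-lam i) * v t x i - ρ i * v t x i
          + lam i * vb t x (1 - i) = 0 ∧
      derivWithin (fun τ => vb τ x i) (Set.Icc 0 T) t
          + (r t i * x + μ t i * F₁ t x i - F₂ t x i) * deriv (fun y => vb t y i) x
          + σ t i ^ 2 * F₁ t x i ^ 2 / 2 * deriv (deriv (fun y => vb t y i)) x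
          + U (F₂ t x i) + (-lam i) * vb t x i - ρ (1 - i) * vb t x i
          + lam i * v t x (1 - i) = 0) ∧
    (∀ i : Fin 2, ∀ x : ℝ, 0 < x → v T x i = U x ∧ vb T x i = U x) := by
  intro v vb
  have h2i : ∀ k : Fin 2, (1 : Fin 2) - (1 - k) = k := by decide
  constructor
  · intro i t ht x hx
    constructor
    · have hk := key_eq T r μ σ lam U F₁ F₂ f f_t f_x f_xx h h_t h_x h_xx hfc hftc hfxc hfxxc
        hft hfx hfxx hfpde hfbd hht hhx hhxx hhpde (ρ i) i t x ht hx
      simp only [v, vb, h2i]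
      exact hk
    · have hk := key_eq T r μ σ lam U F₁ F₂ f f_t f_x f_xx h h_t h_x h_xx hfc hftc hfxc hfxxc
        hft hfx hfxx hfpde hfbd hht hhx hhxx hhpde (ρ (1 - i)) i t x ht hx
      simp only [v, vb]
      exact hk
  · intro i x hx
    constructor
    · simp only [v]
      rw [intervalIntegral.integral_same, sub_self, mul_zero, Real.exp_zero, one_mul,
        zero_add, hhbd i x hx]
    · simp only [vb]
      rw [intervalIntegral.integral_same, sub_self, mul_zero, Real.exp_zero, one_mul,
        zero_add, hhbd i x hx]
end

section
/- Let g, ḡ : [0,T] × {0,1} → ℝ be continuously differentiable, strictly positive functions solving, for every i ∈ {0,1}, j = 1−i, t ∈ [0,T]: g'(t,i) + (β(t,i) − ρ_i + λ_{ii})·g(t,i) + (1−γ)·g(t,i)^{γ/(γ−1)} + λ_{ij}·ḡ(t,j) = 0 and ḡ'(t,i) + (β(t,i) − ρ_j + λ_{ii})·ḡ(t,i) + (1−γ)·g(t,i)^{1/(γ−1)}·ḡ(t,i) + λ_{ij}·g(t,j) = 0, with g(T,i) = ḡ(T,i) = 1. Define α(t,i) = ρ_i − β(t,i) − λ_{ii}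 and ᾱ(t,i) = ρ_j − β(t,i) − λ_{ii}. Then for all t ∈ [0,T] and i ∈ {0,1}: g(t,i) ≥ exp(−∫_t^T α(s,i) ds) and ḡ(t,i) ≥ exp(−∫_t^T ᾱ(s,i) ds); in particular g and ḡ are bounded below on [0,T] × {0,1} by a strictly positive constant. -/
/-- Grönwall-type lower bound: if `F' ≤ f·F` on `[0,T]` and `F T = 1`, then
`F t ≥ exp(-∫_t^T f)`. -/
private lemma key_lower {T : ℝ} (hT : 0 ≤ T) {f F F' : ℝ → ℝ}
    (hf : ContinuousOn f (Set.Icc 0 T))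
    (hF : ∀ t ∈ Set.Icc 0 T, HasDerivWithinAt F (F' t) (Set.Icc 0 T) t)
    (hle : ∀ t ∈ Set.Icc 0 T, F' t ≤ f t * F t)
    (hFT : F T = 1) :
    ∀ t ∈ Set.Icc 0 T, Real.exp (-∫ s in t..T, f s) ≤ F t := by
  set A : ℝ → ℝ := fun u => ∫ s in (0:ℝ)..u, f s with hAdef
  have hint : ∀ t ∈ Set.Icc 0 T, IntervalIntegrable f MeasureTheory.volume 0 t := by
    intro t ht
    apply ContinuousOn.intervalIntegrable
    rw [Set.uIcc_of_le ht.1]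
    exact hf.mono (Set.Icc_subset_Icc le_rfl ht.2)
  have hint2 : ∀ t ∈ Set.Icc 0 T, IntervalIntegrable f MeasureTheory.volume t T := by
    intro t ht
    apply ContinuousOn.intervalIntegrable
    rw [Set.uIcc_of_le ht.2]
    exact hf.mono (Set.Icc_subset_Icc ht.1 le_rfl)
  have hA : ∀ t ∈ Set.Icc 0 T, HasDerivWithinAt A (f t) (Set.Icc 0 T) t := by
    intro t ht
    haveI : Fact (t ∈ Set.Icc 0 T) := ⟨ht⟩
    exact intervalIntegral.integral_hasDerivWithinAt_right (hint t ht)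
      (hf.stronglyMeasurableAtFilter_nhdsWithin measurableSet_Icc t) (hf t ht)
  set G : ℝ → ℝ := fun u => F u * Real.exp (-(A u)) with hGdef
  have hG : ∀ t ∈ Set.Icc 0 T,
      HasDerivWithinAt G (F' t * Real.exp (-(A t)) + F t * (Real.exp (-(A t)) * -(f t)))
        (Set.Icc 0 T) t := by
    intro t ht
    exact (hF t ht).mul ((hA t ht).neg.exp)
  have hGcont : ContinuousOn G (Set.Icc 0 T) := fun x hx => (hG x hx).continuousWithinAt
  have hGanti : AntitoneOn G (Set.Icc 0 T) := by
    apply antitoneOn_of_hasDerivWithinAt_nonpos (convex_Icc 0 T) hGcont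
      (fun x hx => (hG x (interior_subset hx)).mono interior_subset)
    intro x hx
    have hx' : x ∈ Set.Icc 0 T := interior_subset hx
    have h1 := hle x hx'
    have h2 := Real.exp_pos (-(A x))
    nlinarith
  intro t ht
  have hTm : T ∈ Set.Icc (0:ℝ) T := ⟨hT, le_rfl⟩
  have hGT : G T ≤ G t := hGanti ht hTm ht.2
  have hsplit : A t + ∫ s in t..T, f s = A T :=
    intervalIntegral.integral_add_adjacent_intervals (hint t ht) (hint2 t ht)
  have heq : -∫ s in t..T, f s = A t - A T := by linarith
  rw [heq]
  have hGTval : G T = Real.exp (-(A T)) := by simp [hGdef, hFT]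
  rw [hGTval] at hGT
  -- hGT : exp(-(A T)) ≤ F t * exp(-(A t))
  have h3 : Real.exp (-(A T)) * Real.exp (A t) ≤ F t * Real.exp (-(A t)) * Real.exp (A t) :=
    mul_le_mul_of_nonneg_right hGT (Real.exp_pos (A t)).le
  have h4 : F t * Real.exp (-(A t)) * Real.exp (A t) = F t := by
    rw [Real.exp_neg]
    field_simp
  have h5 : Real.exp (-(A T)) * Real.exp (A t) = Real.exp (A t - A T) := by
    rw [← Real.exp_add]; ring_nf
  rw [h4, h5] at h3
  exact h3

/-- A continuous function on `[0,T]` has its integrals `∫_t^T` bounded by `C*T`. -/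
private lemma key_intbound {T : ℝ} (hT : 0 ≤ T) {f : ℝ → ℝ}
    (hf : ContinuousOn f (Set.Icc 0 T)) :
    ∃ C, 0 ≤ C ∧ ∀ t ∈ Set.Icc 0 T, (∫ s in t..T, f s) ≤ C * T := by
  obtain ⟨C, hC⟩ := (isCompact_Icc).exists_bound_of_continuousOn hf
  refine ⟨C, le_trans (norm_nonneg (f 0)) (hC 0 ⟨le_rfl, hT⟩), ?_⟩
  intro t ht
  have h1 : ‖∫ s in t..T, f s‖ ≤ C * |T - t| := by
    apply intervalIntegral.norm_integral_le_of_norm_le_const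
    intro x hx
    rw [Set.uIoc_of_le ht.2] at hx
    exact hC x ⟨le_trans ht.1 hx.1.le, hx.2⟩
  have h2 : (∫ s in t..T, f s) ≤ ‖∫ s in t..T, f s‖ := le_abs_self _
  have h3 : |T - t| = T - t := abs_of_nonneg (by linarith [ht.2])
  have hC0 : 0 ≤ C := le_trans (norm_nonneg (f 0)) (hC 0 ⟨le_rfl, hT⟩)
  have ht0 := ht.1
  nlinarith

/-- Lower bound for the subgame perfect ODE system (appendix, first step of the proof of
Lemma 4.1): if `(g, ḡ)` is a strictly positive continuously differentiable solution of the
system with terminal value `1` (regime set `{0,1}`, `j = 1 − i`, `λ_{ij} = lam i`,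
`λ_{ii} = −lam i`), and `α(t,i) = ρ_i − β(t,i) − λ_{ii}`,
`ᾱ(t,i) = ρ_j − β(t,i) − λ_{ii}`, then `g(t,i) ≥ exp(−∫_t^T α(s,i) ds)` and
`ḡ(t,i) ≥ exp(−∫_t^T ᾱ(s,i) ds)`; in particular `g, ḡ` are bounded below by a strictly
positive constant. -/
theorem stmt_13 (T γ : ℝ) (hT : 0 < T) (hγ : γ < 1) (hγ0 : γ ≠ 0)
    (r μ σ : ℝ → Fin 2 → ℝ)
    (hr : ∀ i, ContinuousOn (fun t => r t i) (Set.Icc 0 T))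
    (hμ : ∀ i, ContinuousOn (fun t => μ t i) (Set.Icc 0 T))
    (hσc : ∀ i, ContinuousOn (fun t => σ t i) (Set.Icc 0 T))
    (hσ : ∀ t i, 0 < σ t i)
    (ρ : Fin 2 → ℝ) (hρ : ∀ i, 0 < ρ i)
    (lam : Fin 2 → ℝ) (hlam : ∀ i, 0 ≤ lam i)
    (g gb g' gb' : ℝ → Fin 2 → ℝ)
    (hgpos : ∀ i : Fin 2, ∀ t ∈ Set.Icc 0 T, 0 < g t i)
    (hgbpos : ∀ i : Fin 2, ∀ t ∈ Set.Icc 0 T, 0 < gb t i)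
    (hgdiff : ∀ i : Fin 2, ∀ t ∈ Set.Icc 0 T,
      HasDerivWithinAt (fun s => g s i) (g' t i) (Set.Icc 0 T) t)
    (hgbdiff : ∀ i : Fin 2, ∀ t ∈ Set.Icc 0 T,
      HasDerivWithinAt (fun s => gb s i) (gb' t i) (Set.Icc 0 T) t)
    (hgcont : ∀ i : Fin 2, ContinuousOn (fun t => g' t i) (Set.Icc 0 T))
    (hgbcont : ∀ i : Fin 2, ContinuousOn (fun t => gb' t i) (Set.Icc 0 T))
    (heq1 : ∀ i : Fin 2, ∀ t ∈ Set.Icc 0 T,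
      g' t i + (betaFn γ r μ σ t i - ρ i - lam i) * g t i
        + (1 - γ) * g t i ^ (γ / (γ - 1)) + lam i * gb t (1 - i) = 0)
    (heq2 : ∀ i : Fin 2, ∀ t ∈ Set.Icc 0 T,
      gb' t i + (betaFn γ r μ σ t i - ρ (1 - i) - lam i) * gb t i
        + (1 - γ) * g t i ^ (1 / (γ - 1)) * gb t i + lam i * g t (1 - i) = 0)
    (hterm : ∀ i : Fin 2, g T i = 1 ∧ gb T i = 1) :
    (∀ i : Fin 2, ∀ t ∈ Set.Icc 0 T,
      Real.exp (-∫ s in t..T, (ρ i - betaFn γ r μ σ s i + lam i)) ≤ g t i ∧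
      Real.exp (-∫ s in t..T, (ρ (1 - i) - betaFn γ r μ σ s i + lam i)) ≤ gb t i) ∧
    ∃ m : ℝ, 0 < m ∧ ∀ i : Fin 2, ∀ t ∈ Set.Icc 0 T, m ≤ g t i ∧ m ≤ gb t i := by
  have h1γ : 0 < 1 - γ := sub_pos.2 hγ
  have hβ : ∀ i, ContinuousOn (fun t => betaFn γ r μ σ t i) (Set.Icc 0 T) := by
    intro i
    apply ContinuousOn.add (continuousOn_const.mul (hr i))
    apply ContinuousOn.div (continuousOn_const.mul ((hμ i).pow 2))
      ((continuousOn_const.mul ((hσc i).pow 2)).mul continuousOn_const)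
    intro t _
    exact ne_of_gt (mul_pos (mul_pos two_pos (pow_pos (hσ t i) 2)) h1γ)
  have hf1 : ∀ i, ContinuousOn (fun s => ρ i - betaFn γ r μ σ s i + lam i) (Set.Icc 0 T) :=
    fun i => (continuousOn_const.sub (hβ i)).add continuousOn_const
  have hf2 : ∀ i, ContinuousOn (fun s => ρ (1 - i) - betaFn γ r μ σ s i + lam i)
      (Set.Icc 0 T) := fun i => (continuousOn_const.sub (hβ i)).add continuousOn_const
  have hgb_bd : ∀ i : Fin 2, ∀ t ∈ Set.Icc 0 T,
      Real.exp (-∫ s in t..T, (ρ (1 - i) - betaFn γ r μ σ s i + lam i)) ≤ gb t i := by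
    intro i
    apply key_lower hT.le (hf2 i) (hgbdiff i) _ (hterm i).2
    intro t ht
    have h := heq2 i t ht
    have hp1 : 0 < g t i ^ (1 / (γ - 1)) := Real.rpow_pos_of_pos (hgpos i t ht) _
    have hp2 : 0 < gb t i := hgbpos i t ht
    have hp3 : 0 < g t (1 - i) := hgpos (1 - i) t ht
    have hl := hlam i
    nlinarith [mul_nonneg hl hp3.le, mul_pos (mul_pos h1γ hp1) hp2]
  have hg_bd : ∀ i : Fin 2, ∀ t ∈ Set.Icc 0 T,
      Real.exp (-∫ s in t..T, (ρ i - betaFn γ r μ σ s i + lam i)) ≤ g t i := by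
    intro i
    apply key_lower hT.le (hf1 i) (hgdiff i) _ (hterm i).1
    intro t ht
    have h := heq1 i t ht
    have hp1 : 0 < g t i ^ (γ / (γ - 1)) := Real.rpow_pos_of_pos (hgpos i t ht) _
    have hp2 : 0 < gb t (1 - i) := hgbpos (1 - i) t ht
    have hl := hlam i
    nlinarith [mul_nonneg hl hp2.le, mul_pos h1γ hp1]
  refine ⟨fun i t ht => ⟨hg_bd i t ht, hgb_bd i t ht⟩, ?_⟩
  obtain ⟨C0, hC00, hC0⟩ := key_intbound hT.le (hf1 0)
  obtain ⟨C1, hC10, hC1⟩ := key_intbound hT.le (hf1 1)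
  obtain ⟨D0, hD00, hD0⟩ := key_intbound hT.le (hf2 0)
  obtain ⟨D1, hD10, hD1⟩ := key_intbound hT.le (hf2 1)
  refine ⟨Real.exp (-((C0 + C1 + D0 + D1) * T)), Real.exp_pos _, ?_⟩
  have hTle := hT.le
  intro i t ht
  have key : ∀ (E : ℝ) (J : ℝ), 0 ≤ E → J ≤ E * T → E ≤ C0 + C1 + D0 + D1 →
      Real.exp (-((C0 + C1 + D0 + D1) * T)) ≤ Real.exp (-J) := by
    intro E J hE hJ hEs
    apply Real.exp_le_exp.2
    nlinarith
  fin_cases i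
  · exact ⟨le_trans (key C0 _ hC00 (hC0 t ht) (by linarith)) (hg_bd 0 t ht),
      le_trans (key D0 _ hD00 (hD0 t ht) (by linarith)) (hgb_bd 0 t ht)⟩
  · exact ⟨le_trans (key C1 _ hC10 (hC1 t ht) (by linarith)) (hg_bd 1 t ht),
      le_trans (key D1 _ hD10 (hD1 t ht) (by linarith)) (hgb_bd 1 t ht)⟩
end

section
/- Let g, ḡ : [0,T] × {0,1} → ℝ be continuously differentiable functions solving, for every i ∈ {0,1}, j = 1−i, t ∈ [0,T]: g'(t,i) + (β(t,i) − ρ_i + λ_{ii})·g(t,i) + (1−γ)·g(t,i)^{γ/(γ−1)} + λ_{ij}·ḡ(t,j) = 0 and ḡ'(t,i) + (β(t,i) − ρ_j + λ_{ii})·ḡ(t,i) + (1−γ)·g(t,i)^{1/(γ−1)}·ḡ(t,i) + λ_{ij}·g(t,j) = 0, with g(T,i) = ḡ(T,i) = 1, and suppose there is m > 0 with g(t,i) ≥ m and ḡ(t,i) ≥ 0 for all t, i. Put α(t,i) = ρ_i − β(t,i) − λ_{ii}, ᾱ(t,i) = ρ_j − β(t,i) − λ_{ii}, K = (1−γ)·m^{1/(γ−1)},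 and for i ≠ j define B(t) = min(α(t,i), ᾱ(t,j)) − K − max(λ_{ij}, λ_{ji}). Then for each i ∈ {0,1}, j = 1−i, the function h(t) = g(t,i) + ḡ(t,j) satisfies h'(t) ≥ B(t)·h(t) on [0,T], and consequently g(t,i) + ḡ(t,j) ≤ 2·exp(−∫_t^T B(s) ds) for all t ∈ [0,T]; in particular g and ḡ are uniformly bounded above on [0,T] × {0,1}. -/
/-- Upper bound for the subgame perfect ODE system (appendix, second step of the proof of
Lemma 4.1): if `(g, ḡ)` solves the system with terminal value `1`, `g ≥ m > 0` and
`ḡ ≥ 0`, then with `α(t,i) = ρ_i − β(t,i) − λ_{ii}`, `ᾱ(t,i) = ρ_j − β(t,i) − λ_{ii}`,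
`K = (1−γ)m^{1/(γ−1)}` and `B(t) = min(α(t,i), ᾱ(t,j)) − K − max(λ_{ij}, λ_{ji})`
(for `j = 1 − i`, `λ_{ij} = lam i`, `λ_{ii} = −lam i`), the function
`h(t) = g(t,i) + ḡ(t,j)` satisfies `h' ≥ B·h` on `[0,T]`, hence
`g(t,i) + ḡ(t,j) ≤ 2·exp(−∫_t^T B(s) ds)`; in particular `g, ḡ` are uniformly bounded
above on `[0,T] × {0,1}`. -/
theorem stmt_14 (T γ m : ℝ) (hT : 0 < T) (hγ : γ < 1) (hγ0 : γ ≠ 0) (hm : 0 < m)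
    (r μ σ : ℝ → Fin 2 → ℝ)
    (hr : ∀ i, ContinuousOn (fun t => r t i) (Set.Icc 0 T))
    (hμ : ∀ i, ContinuousOn (fun t => μ t i) (Set.Icc 0 T))
    (hσc : ∀ i, ContinuousOn (fun t => σ t i) (Set.Icc 0 T))
    (hσ : ∀ t i, 0 < σ t i)
    (ρ : Fin 2 → ℝ) (hρ : ∀ i, 0 < ρ i)
    (lam : Fin 2 → ℝ) (hlam : ∀ i, 0 ≤ lam i)
    (g gb g' gb' : ℝ → Fin 2 → ℝ)
    (hglb : ∀ i : Fin 2, ∀ t ∈ Set.Icc 0 T, m ≤ g t i)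
    (hgblb : ∀ i : Fin 2, ∀ t ∈ Set.Icc 0 T, 0 ≤ gb t i)
    (hgdiff : ∀ i : Fin 2, ∀ t ∈ Set.Icc 0 T,
      HasDerivWithinAt (fun s => g s i) (g' t i) (Set.Icc 0 T) t)
    (hgbdiff : ∀ i : Fin 2, ∀ t ∈ Set.Icc 0 T,
      HasDerivWithinAt (fun s => gb s i) (gb' t i) (Set.Icc 0 T) t)
    (hgcont : ∀ i : Fin 2, ContinuousOn (fun t => g' t i) (Set.Icc 0 T))
    (hgbcont : ∀ i : Fin 2, ContinuousOn (fun t => gb' t i) (Set.Icc 0 T))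
    (heq1 : ∀ i : Fin 2, ∀ t ∈ Set.Icc 0 T,
      g' t i + (betaFn γ r μ σ t i - ρ i - lam i) * g t i
        + (1 - γ) * g t i ^ (γ / (γ - 1)) + lam i * gb t (1 - i) = 0)
    (heq2 : ∀ i : Fin 2, ∀ t ∈ Set.Icc 0 T,
      gb' t i + (betaFn γ r μ σ t i - ρ (1 - i) - lam i) * gb t i
        + (1 - γ) * g t i ^ (1 / (γ - 1)) * gb t i + lam i * g t (1 - i) = 0)
    (hterm : ∀ i : Fin 2, g T i = 1 ∧ gb T i = 1) :
    let α : ℝ → Fin 2 → ℝ := fun t i => ρ i - betaFn γ r μ σ t i + lam i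
    let αb : ℝ → Fin 2 → ℝ := fun t i => ρ (1 - i) - betaFn γ r μ σ t i + lam i
    let K : ℝ := (1 - γ) * m ^ (1 / (γ - 1))
    let B : ℝ → Fin 2 → ℝ := fun t i =>
      min (α t i) (αb t (1 - i)) - K - max (lam i) (lam (1 - i))
    (∀ i : Fin 2, ∀ t ∈ Set.Icc 0 T,
      B t i * (g t i + gb t (1 - i)) ≤ g' t i + gb' t (1 - i)) ∧
    (∀ i : Fin 2, ∀ t ∈ Set.Icc 0 T,
      g t i + gb t (1 - i) ≤ 2 * Real.exp (-∫ s in t..T, B s i)) ∧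
    ∃ M : ℝ, ∀ i : Fin 2, ∀ t ∈ Set.Icc 0 T, g t i ≤ M ∧ gb t i ≤ M := by
  intro α αb K B
  have h1γ : (0:ℝ) < 1 - γ := by linarith
  have hγ1 : γ - 1 ≠ 0 := by linarith
  have hexpneg : 1 / (γ - 1) ≤ 0 :=
    le_of_lt (div_neg_of_pos_of_neg one_pos (by linarith))
  have hsub : ∀ i : Fin 2, (1 - (1 - i)) = i := by decide
  -- continuity of β
  have hβc : ∀ i, ContinuousOn (fun t => betaFn γ r μ σ t i) (Set.Icc 0 T) := by
    intro i
    have hden : ∀ t ∈ Set.Icc (0:ℝ) T, 2 * (σ t i) ^ 2 * (1 - γ) ≠ 0 := by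
      intro t _
      have := hσ t i
      positivity
    exact (continuousOn_const.mul (hr i)).add
      (((continuousOn_const.mul ((hμ i).pow 2))).div
        ((continuousOn_const.mul ((hσc i).pow 2)).mul continuousOn_const) hden)
  have hBc : ∀ i : Fin 2, ContinuousOn (fun t => B t i) (Set.Icc 0 T) := by
    intro i
    exact ((((continuousOn_const.sub (hβc i)).add continuousOn_const).inf
      ((continuousOn_const.sub (hβc (1 - i))).add continuousOn_const)).sub
        continuousOn_const).sub continuousOn_const
  -- Part 1
  have part1 : ∀ i : Fin 2, ∀ t ∈ Set.Icc 0 T,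
      B t i * (g t i + gb t (1 - i)) ≤ g' t i + gb' t (1 - i) := by
    intro i t ht
    set j : Fin 2 := 1 - i with hj
    have hji : (1 : Fin 2) - j = i := hsub i
    have ha : (0:ℝ) < g t i := lt_of_lt_of_le hm (hglb i t ht)
    have ha2 : (0:ℝ) < g t j := lt_of_lt_of_le hm (hglb j t ht)
    have hb : (0:ℝ) ≤ gb t j := hgblb j t ht
    -- rewrite the two ODEs
    have e1 : g' t i = α t i * g t i - (1 - γ) * g t i ^ (γ / (γ - 1))
        - lam i * gb t j := by
      have h := heq1 i t ht
      rw [← hj] at h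
      simp only [α]
      linear_combination h
    have e2 : gb' t j = αb t j * gb t j
        - (1 - γ) * g t j ^ (1 / (γ - 1)) * gb t j - lam j * g t i := by
      have h := heq2 j t ht
      rw [hji] at h
      simp only [αb]
      rw [hji]
      linear_combination h
    -- rpow inequalities
    have hrm : g t i ^ (1 / (γ - 1)) ≤ m ^ (1 / (γ - 1)) :=
      Real.rpow_le_rpow_of_nonpos hm (hglb i t ht) hexpneg
    have hrm2 : g t j ^ (1 / (γ - 1)) ≤ m ^ (1 / (γ - 1)) :=
      Real.rpow_le_rpow_of_nonpos hm (hglb j t ht) hexpneg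
    have hexpsplit : γ / (γ - 1) = 1 + 1 / (γ - 1) := by field_simp; ring
    have hpowsplit : g t i ^ (γ / (γ - 1)) = g t i * g t i ^ (1 / (γ - 1)) := by
      rw [hexpsplit, Real.rpow_add ha, Real.rpow_one]
    have P1 : (1 - γ) * g t i ^ (γ / (γ - 1)) ≤ K * g t i := by
      rw [hpowsplit]
      calc (1 - γ) * (g t i * g t i ^ (1 / (γ - 1)))
          = ((1 - γ) * g t i) * g t i ^ (1 / (γ - 1)) := by ring
        _ ≤ ((1 - γ) * g t i) * m ^ (1 / (γ - 1)) :=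
            mul_le_mul_of_nonneg_left hrm (by nlinarith)
        _ = K * g t i := by simp only [K]; ring
    have P2 : (1 - γ) * g t j ^ (1 / (γ - 1)) * gb t j ≤ K * gb t j := by
      calc (1 - γ) * g t j ^ (1 / (γ - 1)) * gb t j
          = ((1 - γ) * gb t j) * g t j ^ (1 / (γ - 1)) := by ring
        _ ≤ ((1 - γ) * gb t j) * m ^ (1 / (γ - 1)) :=
            mul_le_mul_of_nonneg_left hrm2 (by nlinarith)
        _ = K * gb t j := by simp only [K]; ring
    have hmin1 : min (α t i) (αb t j) * g t i ≤ α t i * g t i :=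
      mul_le_mul_of_nonneg_right (min_le_left _ _) ha.le
    have hmin2 : min (α t i) (αb t j) * gb t j ≤ αb t j * gb t j :=
      mul_le_mul_of_nonneg_right (min_le_right _ _) hb
    have hmax1 : lam i * gb t j ≤ max (lam i) (lam j) * gb t j :=
      mul_le_mul_of_nonneg_right (le_max_left _ _) hb
    have hmax2 : lam j * g t i ≤ max (lam i) (lam j) * g t i :=
      mul_le_mul_of_nonneg_right (le_max_right _ _) ha.le
    have hBexp : B t i * (g t i + gb t j)
        = min (α t i) (αb t j) * g t i + min (α t i) (αb t j) * gb t j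
          - K * g t i - K * gb t j
          - max (lam i) (lam j) * g t i - max (lam i) (lam j) * gb t j := by
      simp only [B]
      ring
    rw [hBexp, e1, e2]
    clear_value α αb K B
    linarith
  -- integrability helper
  have hint : ∀ (i : Fin 2) (x y : ℝ), x ∈ Set.Icc 0 T → y ∈ Set.Icc 0 T →
      IntervalIntegrable (fun s => B s i) MeasureTheory.volume x y := by
    intro i x y hx hy
    apply ContinuousOn.intervalIntegrable
    apply (hBc i).mono
    rw [show Set.Icc (0:ℝ) T = Set.uIcc 0 T from (Set.uIcc_of_le hT.le).symm]
    exact Set.uIcc_subset_uIcc ((Set.uIcc_of_le hT.le).symm ▸ hx)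
      ((Set.uIcc_of_le hT.le).symm ▸ hy)
  -- Part 2
  have part2 : ∀ i : Fin 2, ∀ t ∈ Set.Icc 0 T,
      g t i + gb t (1 - i) ≤ 2 * Real.exp (-∫ s in t..T, B s i) := by
    intro i t ht
    set j : Fin 2 := 1 - i with hj
    set I : ℝ → ℝ := fun x => ∫ s in (0:ℝ)..x, B s i with hI
    have hT0 : (0:ℝ) ∈ Set.Icc (0:ℝ) T := ⟨le_refl _, hT.le⟩
    have hTT : T ∈ Set.Icc (0:ℝ) T := ⟨hT.le, le_refl _⟩
    have hIc : ContinuousOn I (Set.Icc 0 T) := by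
      rw [show Set.Icc (0:ℝ) T = Set.uIcc 0 T from (Set.uIcc_of_le hT.le).symm]
      apply intervalIntegral.continuousOn_primitive_interval
      rw [Set.uIcc_of_le hT.le]
      exact (hBc i).integrableOn_Icc
    have hIderiv : ∀ x ∈ Set.Ioo (0:ℝ) T, HasDerivAt I (B x i) x := by
      intro x hx
      have hxI : x ∈ Set.Icc (0:ℝ) T := Set.Ioo_subset_Icc_self hx
      have hmem : Set.Icc (0:ℝ) T ∈ nhds x := Icc_mem_nhds hx.1 hx.2
      have hca : ContinuousAt (fun s => B s i) x := (hBc i).continuousAt hmem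
      exact intervalIntegral.integral_hasDerivAt_right (hint i 0 x hT0 hxI)
        ⟨Set.Icc 0 T, hmem, (hBc i).aestronglyMeasurable measurableSet_Icc⟩ hca
    set F : ℝ → ℝ := fun x => (g x i + gb x j) * Real.exp (-I x) with hF
    have hhc : ContinuousOn (fun x => g x i + gb x j) (Set.Icc 0 T) :=
      (fun x hx => ((hgdiff i x hx).add (hgbdiff j x hx)).continuousWithinAt)
    have hFc : ContinuousOn F (Set.Icc 0 T) :=
      hhc.mul ((hIc.neg).rexp)
    have hFmono : MonotoneOn F (Set.Icc 0 T) := by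
      apply monotoneOn_of_hasDerivWithinAt_nonneg (convex_Icc 0 T) hFc
        (f' := fun x => (g' x i + gb' x j - B x i * (g x i + gb x j)) * Real.exp (-I x))
      · intro x hx
        rw [interior_Icc] at hx ⊢
        have hxI : x ∈ Set.Icc (0:ℝ) T := Set.Ioo_subset_Icc_self hx
        have hh : HasDerivWithinAt (fun s => g s i + gb s j) (g' x i + gb' x j)
            (Set.Ioo 0 T) x :=
          ((hgdiff i x hxI).add (hgbdiff j x hxI)).mono Set.Ioo_subset_Icc_self
        have hE : HasDerivAt (fun s => Real.exp (-I s)) (Real.exp (-I x) * -(B x i)) x :=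
          ((hIderiv x hx).neg).exp
        have := hh.fun_mul hE.hasDerivWithinAt
        exact this.congr_deriv (by ring)
      · intro x hx
        rw [interior_Icc] at hx
        have hxI : x ∈ Set.Icc (0:ℝ) T := Set.Ioo_subset_Icc_self hx
        have := part1 i x hxI
        have hE := Real.exp_pos (-I x)
        nlinarith
    have hFle : F t ≤ F T := hFmono ht hTT ht.2
    have hFT : F T = 2 * Real.exp (-I T) := by
      simp only [F]
      rw [(hterm i).1, (hterm j).2]
      ring
    rw [hFT] at hFle
    have hadj : I t + ∫ s in t..T, B s i = I T :=
      intervalIntegral.integral_add_adjacent_intervals (hint i 0 t hT0 ht) (hint i t T ht hTT)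
    have key : (-∫ s in t..T, B s i) = I t - I T := by linarith
    rw [key]
    have e1 : Real.exp (-I t) * Real.exp (I t) = 1 := by
      rw [← Real.exp_add]; simp
    have e2 : Real.exp (-I T) * Real.exp (I t) = Real.exp (I t - I T) := by
      rw [← Real.exp_add]; ring_nf
    calc g t i + gb t j = (g t i + gb t j) * Real.exp (-I t) * Real.exp (I t) := by
          rw [mul_assoc, e1, mul_one]
      _ ≤ 2 * Real.exp (-I T) * Real.exp (I t) :=
          mul_le_mul_of_nonneg_right hFle (Real.exp_nonneg _)
      _ = 2 * Real.exp (I t - I T) := by rw [mul_assoc, e2]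
  refine ⟨part1, part2, ?_⟩
  -- Part 3 : uniform bound
  have hbndc : ∀ i : Fin 2,
      ContinuousOn (fun t => 2 * Real.exp (-∫ s in t..T, B s i)) (Set.Icc 0 T) := by
    intro i
    have h1 : ContinuousOn (fun x => ∫ s in x..T, B s i) (Set.Icc 0 T) := by
      rw [show Set.Icc (0:ℝ) T = Set.uIcc 0 T from (Set.uIcc_of_le hT.le).symm]
      apply intervalIntegral.continuousOn_primitive_interval_left
      rw [Set.uIcc_of_le hT.le]
      exact (hBc i).integrableOn_Icc
    exact continuousOn_const.mul ((h1.neg).rexp)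
  have hCex : ∀ i : Fin 2, ∃ C : ℝ, ∀ t ∈ Set.Icc (0:ℝ) T,
      ‖2 * Real.exp (-∫ s in t..T, B s i)‖ ≤ C :=
    fun i => isCompact_Icc.exists_bound_of_continuousOn (hbndc i)
  choose C hC using hCex
  refine ⟨max (C 0) (C 1), ?_⟩
  have hCM : ∀ i : Fin 2, C i ≤ max (C 0) (C 1) := by
    intro i
    fin_cases i
    · exact le_max_left _ _
    · exact le_max_right _ _
  intro i t ht
  have hb1 : g t i + gb t (1 - i) ≤ C i := by
    refine le_trans (part2 i t ht) (le_trans (le_abs_self _) ?_)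
    exact hC i t ht
  have hb2 : g t (1 - i) + gb t i ≤ C (1 - i) := by
    have := part2 (1 - i) t ht
    rw [hsub i] at this
    refine le_trans this (le_trans (le_abs_self _) ?_)
    exact hC (1 - i) t ht
  constructor
  · have := hgblb (1 - i) t ht
    calc g t i ≤ C i := by linarith
      _ ≤ _ := hCM i
  · have : m ≤ g t (1 - i) := hglb (1 - i) t ht
    calc gb t i ≤ C (1 - i) := by linarith
      _ ≤ _ := hCM (1 - i)
end
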